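/- arXiv:2601.15940 — 2 statements merged into one kernel-verified Lean document; each statement's English description precedes it below -/
import Mathlib

section
/- Let Σ be a finite alphabet and let L ⊆ Σ^ω be ω-regular (recognised by some deterministic parity automaton). Then for every x ≥ 1, the congruence ≈ has finite index on (Σ*)^x, i.e. there are only finitely many ≈-equivalence classes of x-tuples of finite words. -/
open scoped Classical

noncomputable section

/-! ### Infinite words and the parity condition -/

/-- The minimal value occurring infinitely often in a sequence of priorities;
for (eventually) bounded sequences this is the `liminf`. -/
def minInfOften (pi : ℕ → ℕ) : ℕ := sInf {x : ℕ | ∀ N : ℕ, ∃ n : ℕ, N ≤ n ∧ pi n = x}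

/-- The (min-)parity acceptance condition: the liminf of the priorities is even. -/
def ParityAccept (pi : ℕ → ℕ) : Prop := Even (minInfOften pi)

/-- Prepend a finite word to an infinite word. -/
def prependW {α : Type} (u : List α) (w : ℕ → α) : ℕ → α := fun i =>
  if h : i < u.length then u.get ⟨i, h⟩ else w (i - u.length)

/-- The prefix of length `n` of an infinite word, as a list. -/
def wordPrefix {α : Type} (w : ℕ → α) (n : ℕ) : List α := List.ofFn (fun i : Fin n => w i)

/-- Drop the first `n` letters of an infinite word. -/
def wordDrop {α : Type} (w : ℕ → α) (n : ℕ) : ℕ → α := fun i => w (n + i)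

/-- The periodic infinite word `v^ω` (junk if `v = []`). -/
def perWord {α : Type} [Inhabited α] (v : List α) : ℕ → α := fun i => v.getD (i % v.length) default

/-! ### Layered automata -/

/-- A layered automaton over the alphabet `α` with `d` layers.  The (disjoint) layers
are encoded by the function `layer : Q → [1,d]`; each layer is a deterministic
transition system (partial transition function `δ`, which stays inside the layer);
`μ` sends each state of layer `x+1` to its parent in layer `x` (and is the identity
on layer `1`) and is a morphism of transition systems; layer `1` is complete, carries
the initial state, and all its states are reachable from the initial state. -/
structure Layered (Q α : Type) (d : ℕ) where
  layer : Q → ℕ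
  layer_pos : ∀ q, 1 ≤ layer q
  layer_le : ∀ q, layer q ≤ d
  δ : Q → α → Option Q
  δ_layer : ∀ q a q', δ q a = some q' → layer q' = layer q
  μ : Q → Q
  μ_layer : ∀ q, 1 < layer q → layer (μ q) + 1 = layer q
  μ_id : ∀ q, layer q = 1 → μ q = q
  μ_morph : ∀ q a q', 1 < layer q → δ q a = some q' → δ (μ q) a = some (μ q')
  init : Q
  init_layer : layer init = 1
  complete1 : ∀ q a, layer q = 1 → (δ q a).isSome = true
  reach1 : ∀ q, layer q = 1 →
    Relation.ReflTransGen (fun p p' => layer p = 1 ∧ ∃ a, δ p a = some p') init q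

namespace Layered

variable {Q R α : Type} {d d' : ℕ}

/-- The run of the (deterministic) layer transition systems on a finite word. -/
def runList (A : Layered Q α d) : Q → List α → Option Q
  | q, [] => some q
  | q, a :: u =>
    match A.δ q a with
    | some q' => runList A q' u
    | none => none

/-- `μ̂_x q`: the ancestor of `q` in layer `x` (image under the composed morphisms). -/
def muHat (A : Layered Q α d) (x : ℕ) (q : Q) : Q := (A.μ)^[A.layer q - x] q

/-- A leaf state: a state that is not in the image of any of the morphisms `μ_x`. -/
def IsLeaf (A : Layered Q α d) (q : Q) : Prop := ∀ p, 1 < A.layer p → A.μ p ≠ q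

/-- `layer(q,a)`: the largest layer `x ≤ layer q` in which `δ_x (μ̂_x q) a` is defined. -/
def layerOf (A : Layered Q α d) (q : Q) (a : α) : ℕ :=
  Nat.findGreatest (fun x => (A.δ (A.muHat x q) a).isSome = true) (A.layer q)

/-- A state `p` is an ancestor of `q`. -/
def IsAncestor (A : Layered Q α d) (p q : Q) : Prop :=
  A.layer p ≤ A.layer q ∧ A.muHat (A.layer p) q = p

/-! #### Safe languages and strong acceptance -/

/-- Membership of a finite word in the `x`-safe language of `q`. -/
def SafeFin (A : Layered Q α d) (x : ℕ) (q : Q) (u : List α) : Prop :=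
  (A.runList (A.muHat x q) u).isSome = true

/-- Membership of an infinite word in the `x`-safe language of `q`. -/
def SafeInf (A : Layered Q α d) (x : ℕ) (q : Q) (w : ℕ → α) : Prop :=
  ∀ n : ℕ, A.SafeFin x q (wordPrefix w n)

/-- `w` is strongly accepted by the state `p` (which lies in the even layer `x = layer p`):
`w` is `x`-safe from `p` and no decomposition `w = u·w'` admits a state `p'` of layer `x+1`
with a `u`-run from `p` to the parent of `p'` in `T_x` such that `w'` is `(x+1)`-safe from `p'`. -/
def StronglyAcc (A : Layered Q α d) (p : Q) (w : ℕ → α) : Prop :=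
  Even (A.layer p) ∧ A.SafeInf (A.layer p) p w ∧
  ∀ (n : ℕ) (p' : Q), A.layer p' = A.layer p + 1 →
    A.runList p (wordPrefix w n) = some (A.μ p') →
    ¬ A.SafeInf (A.layer p') p' (wordDrop w n)

/-- `w` is strongly rejected by `p` (lying in an odd layer). -/
def StronglyRej (A : Layered Q α d) (p : Q) (w : ℕ → α) : Prop :=
  Odd (A.layer p) ∧ A.SafeInf (A.layer p) p w ∧
  ∀ (n : ℕ) (p' : Q), A.layer p' = A.layer p + 1 →
    A.runList p (wordPrefix w n) = some (A.μ p') →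
    ¬ A.SafeInf (A.layer p') p' (wordDrop w n)

/-- Consistency: no two states with the same layer-1 ancestor strongly accept
resp. strongly reject a common infinite word. -/
def Consistent (A : Layered Q α d) : Prop :=
  ¬ ∃ (p p' : Q) (w : ℕ → α), A.muHat 1 p = A.muHat 1 p' ∧
      A.StronglyAcc p w ∧ A.StronglyRej p' w

/-- `w` is ultimately safe in layer `x`, for the automaton started in the
layer-1 state `q0`. -/
def UltSafeFrom (A : Layered Q α d) (q0 : Q) (x : ℕ) (w : ℕ → α) : Prop :=
  ∃ (n : ℕ) (p : Q), A.layer p = x ∧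
    A.runList q0 (wordPrefix w n) = some (A.muHat 1 p) ∧
    A.SafeInf x p (wordDrop w n)

/-- Layered acceptance from `q0`: the maximal layer in which `w` is ultimately safe is even. -/
def LayeredAcceptFrom (A : Layered Q α d) (q0 : Q) (w : ℕ → α) : Prop :=
  ∃ x : ℕ, Even x ∧ A.UltSafeFrom q0 x w ∧ ∀ y : ℕ, A.UltSafeFrom q0 y w → y ≤ x

/-- Layered rejection from `q0`: the maximal layer in which `w` is ultimately safe is odd. -/
def LayeredRejectFrom (A : Layered Q α d) (q0 : Q) (w : ℕ → α) : Prop :=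
  ∃ x : ℕ, Odd x ∧ A.UltSafeFrom q0 x w ∧ ∀ y : ℕ, A.UltSafeFrom q0 y w → y ≤ x

/-! #### The semantics automaton `⟦A⟧` (a simple-by-priorities alternating parity automaton) -/

/-- The priority of the letter `a` in the state `q` of `⟦A⟧`. -/
def semPrio (A : Layered Q α d) (q : Q) (a : α) : ℕ := A.layerOf q a

/-- The transitions of `⟦A⟧` (between leaf states): `q —a→ q'` iff, for
`x = layer(q,a)`, we have `δ_x (μ̂_x q) a = μ̂_x q'`; the transition carries priority `x`. -/
def semStep (A : Layered Q α d) (q : Q) (a : α) (q' : Q) : Prop :=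
  A.IsLeaf q' ∧ A.δ (A.muHat (A.layerOf q a) q) a = some (A.muHat (A.layerOf q a) q')

/-- Runs of `⟦A⟧` over the infinite word `w`, starting in `p`. -/
def IsSemRun (A : Layered Q α d) (w : ℕ → α) (p : Q) (ρ : ℕ → Q) : Prop :=
  ρ 0 = p ∧ ∀ i : ℕ, A.semStep (ρ i) (w i) (ρ (i + 1))

/-- The sequence of priorities produced by a run of `⟦A⟧` over `w`. -/
def runPrios (A : Layered Q α d) (w : ℕ → α) (ρ : ℕ → Q) : ℕ → ℕ :=
  fun i => A.semPrio (ρ i) (w i)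

/-- A resolver for Eve in `⟦A⟧`: given the history (the finite run so far, as a list of
(state, letter) pairs), the current state and a letter of odd priority, it picks a successor. -/
def EveResolver (A : Layered Q α d) (σ : List (Q × α) → Q → α → Q) : Prop :=
  ∀ (h : List (Q × α)) (q : Q) (a : α), Odd (A.semPrio q a) → A.semStep q a (σ h q a)

/-- A resolver for Adam in `⟦A⟧` (resolving the even-priority steps). -/
def AdamResolver (A : Layered Q α d) (τ : List (Q × α) → Q → α → Q) : Prop :=
  ∀ (h : List (Q × α)) (q : Q) (a : α), Even (A.semPrio q a) → A.semStep q a (τ h q a)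

/-- A run is consistent with the Eve-resolver `σ`: every odd-priority step follows `σ`. -/
def ConsEve (A : Layered Q α d) (σ : List (Q × α) → Q → α → Q) (w : ℕ → α) (ρ : ℕ → Q) : Prop :=
  ∀ i : ℕ, Odd (A.semPrio (ρ i) (w i)) →
    ρ (i + 1) = σ (List.ofFn fun j : Fin i => (ρ (j : ℕ), w (j : ℕ))) (ρ i) (w i)

/-- A run is consistent with the Adam-resolver `τ`: every even-priority step follows `τ`. -/
def ConsAdam (A : Layered Q α d) (τ : List (Q × α) → Q → α → Q) (w : ℕ → α) (ρ : ℕ → Q) : Prop :=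
  ∀ i : ℕ, Even (A.semPrio (ρ i) (w i)) →
    ρ (i + 1) = τ (List.ofFn fun j : Fin i => (ρ (j : ℕ), w (j : ℕ))) (ρ i) (w i)

/-- Acceptance of `w` by `⟦A⟧` from the (leaf) state `p`: Eve has a winning strategy
in the game `G(⟦A⟧,w)`, i.e. a resolver all of whose consistent runs satisfy parity. -/
def SemAccept (A : Layered Q α d) (p : Q) (w : ℕ → α) : Prop :=
  ∃ σ : List (Q × α) → Q → α → Q, A.EveResolver σ ∧
    ∀ ρ : ℕ → Q, A.IsSemRun w p ρ → A.ConsEve σ w ρ → ParityAccept (A.runPrios w ρ)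

/-- Uniform semantic determinism: leaf states with the same layer-1 ancestor
recognise the same language in `⟦A⟧`. -/
def UnifSD (A : Layered Q α d) : Prop :=
  ∀ p q : Q, A.IsLeaf p → A.IsLeaf q → A.muHat 1 p = A.muHat 1 q →
    ∀ w : ℕ → α, (A.SemAccept p w ↔ A.SemAccept q w)

/-! #### Longest suffix resolvers -/

/-- `v` is a suffix-witness to `r`: the layer of `r` has a run labelled `v` ending in `r`. -/
def suffixReaches (A : Layered Q α d) (r : Q) (v : List α) : Prop :=
  ∃ p : Q, A.layer p = A.layer r ∧ A.runList p v = some r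

/-- The length of the longest suffix `v` of `u` such that the layer of `r` has a
run labelled `v` ending in `r`. -/
def longestSuffixLen (A : Layered Q α d) (u : List α) (r : Q) : ℕ :=
  Nat.findGreatest (fun k => k ≤ u.length ∧ A.suffixReaches r (u.drop (u.length - k))) u.length

/-- A longest suffix resolver for Eve, initialised to `u0`: a valid Eve-resolver that,
at a step of odd priority `x` after having read `v`, moves to an `a`-successor `q'`
maximising the length of the longest `(x+1)`-suffix of `u0·v·a` to `μ̂_{x+1} q'`. -/
def IsLongestSuffixResolverE (A : Layered Q α d) (u0 : List α)
    (σ : List (Q × α) → Q → α → Q) : Prop :=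
  A.EveResolver σ ∧
  ∀ (h : List (Q × α)) (q : Q) (a : α), Odd (A.semPrio q a) →
    ∀ q' : Q, A.semStep q a q' →
      A.longestSuffixLen (u0 ++ h.map Prod.snd ++ [a]) (A.muHat (A.semPrio q a + 1) q') ≤
      A.longestSuffixLen (u0 ++ h.map Prod.snd ++ [a]) (A.muHat (A.semPrio q a + 1) (σ h q a))

/-- A longest suffix resolver for Adam, initialised to `u0` (symmetric, for even priorities). -/
def IsLongestSuffixResolverA (A : Layered Q α d) (u0 : List α)
    (τ : List (Q × α) → Q → α → Q) : Prop :=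
  A.AdamResolver τ ∧
  ∀ (h : List (Q × α)) (q : Q) (a : α), Even (A.semPrio q a) →
    ∀ q' : Q, A.semStep q a q' →
      A.longestSuffixLen (u0 ++ h.map Prod.snd ++ [a]) (A.muHat (A.semPrio q a + 1) q') ≤
      A.longestSuffixLen (u0 ++ h.map Prod.snd ++ [a]) (A.muHat (A.semPrio q a + 1) (τ h q a))

/-! #### The random walk on `⟦A⟧` -/

/-- The uniform step probability of the random walk of `⟦A⟧`. -/
def stepProb (A : Layered Q α d) (q : Q) (a : α) (q' : Q) : ENNReal :=
  if A.semStep q a q' then ((Nat.card {p : Q // A.semStep q a p} : ENNReal))⁻¹ else 0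

/-- `m` is the Markov measure of the random walk of `⟦A⟧` over the word `w` started at `p`:
a probability measure on `ℕ → Q` whose cylinder probabilities are the products of the
uniform step probabilities. -/
def IsWalkMeasure [MeasurableSpace Q] (A : Layered Q α d) (w : ℕ → α) (p : Q)
    (m : MeasureTheory.Measure (ℕ → Q)) : Prop :=
  MeasureTheory.IsProbabilityMeasure m ∧
  ∀ (n : ℕ) (s : Fin (n + 1) → Q),
    m {ρ : ℕ → Q | ∀ i : Fin (n + 1), ρ (i : ℕ) = s i} =
      (if s 0 = p then 1 else 0) *
        ∏ i : Fin n, A.stepProb (s i.castSucc) (w (i : ℕ)) (s i.succ)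

/-! #### Normal form, centrality, safe minimality, central sequences -/

/-- Normal form: (N1) every layer `x ≥ 2` is a union of non-trivial SCCs, and
(N2) the safe language of every child is strictly smaller than that of its parent. -/
def NormalForm (A : Layered Q α d) : Prop :=
  ∀ q : Q, 2 ≤ A.layer q →
    (∀ (u : List α) (q' : Q), A.runList q u = some q' →
      ∃ v : List α, v ≠ [] ∧ A.runList q' v = some q) ∧
    (∀ p : Q, 1 < A.layer p → A.μ p = q →
      ∃ u : List α, (A.runList q u).isSome = true ∧ A.runList p u = none)

/-- Inclusion of `x`-safe languages. -/
def SafeLE (A : Layered Q α d) (x : ℕ) (p q : Q) : Prop :=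
  (∀ u : List α, A.SafeFin x p u → A.SafeFin x q u) ∧
  (∀ w : ℕ → α, A.SafeInf x p w → A.SafeInf x q w)

/-- Centralised: siblings (same parent) whose safe languages are included,
lie in the same SCC of their layer. -/
def Centralised (A : Layered Q α d) : Prop :=
  ∀ p q : Q, 2 ≤ A.layer p → A.layer q = A.layer p →
    A.muHat (A.layer p - 1) p = A.muHat (A.layer p - 1) q →
    A.SafeLE (A.layer p) p q →
    (∃ u : List α, A.runList p u = some q) ∧ (∃ v : List α, A.runList q v = some p)

/-- `L(p) = L(q)`: all leaves above (the layer-1 ancestor of) `p` and all leaves above `q`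
recognise the same language in `⟦A⟧`. -/
def LangEq1 (A : Layered Q α d) (p q : Q) : Prop :=
  ∀ l l' : Q, A.IsLeaf l → A.IsLeaf l' → A.muHat 1 l = A.muHat 1 p →
    A.muHat 1 l' = A.muHat 1 q → ∀ w : ℕ → α, (A.SemAccept l w ↔ A.SemAccept l' w)

/-- The equivalence `p ≈_x q`: language equivalence together with equality of all
`y`-safe languages for `2 ≤ y ≤ x`. -/
def ApproxEq (A : Layered Q α d) (x : ℕ) (p q : Q) : Prop :=
  A.LangEq1 p q ∧ ∀ y : ℕ, 2 ≤ y → y ≤ x →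
    ((∀ u : List α, A.SafeFin y p u ↔ A.SafeFin y q u) ∧
     (∀ w : ℕ → α, A.SafeInf y p w ↔ A.SafeInf y q w))

/-- Safe minimality: `≈_x`-equivalent states of the same layer are equal. -/
def SafeMinimal (A : Layered Q α d) : Prop :=
  ∀ p q : Q, A.layer p = A.layer q → A.ApproxEq (A.layer p) p q → p = q

/-- `z` is a central sequence for the state `p` (of layer `x = layer p`). -/
def IsCentralSeq (A : Layered Q α d) (p : Q) (z : List α) : Prop :=
  z ≠ [] ∧ A.runList p z = some p ∧
  (∀ q : Q, A.layer q = A.layer p →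
    A.muHat (A.layer p - 1) q = A.muHat (A.layer p - 1) p →
    (A.runList q z = some p ∨ A.runList q z = none)) ∧
  (∀ q' : Q, A.layer q' = A.layer p + 1 →
    A.muHat (A.layer p - 1) q' = A.muHat (A.layer p - 1) p →
    A.runList q' z = none)

end Layered

/-! ### Morphisms of layered automata -/

/-- A morphism of layered automata. -/
structure IsLayMorphism {Q R α : Type} {d d' : ℕ} (A : Layered Q α d) (B : Layered R α d')
    (φ : Q → R) : Prop where
  map_init : φ A.init = B.init
  map_step : ∀ q a q', A.δ q a = some q' → B.δ (φ q) a = some (φ q')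
  map_anc : ∀ p q, A.IsAncestor p q → B.IsAncestor (φ p) (φ q)

/-- A strong morphism of layered automata additionally preserves non-transitions. -/
def IsStrongLayMorphism {Q R α : Type} {d d' : ℕ} (A : Layered Q α d) (B : Layered R α d')
    (φ : Q → R) : Prop :=
  IsLayMorphism A B φ ∧ ∀ q a, A.δ q a = none → B.δ (φ q) a = none

/-- An isomorphism of layered automata: a bijection on states that restricts to
isomorphisms of the layer transition systems, preserves the initial state, and
commutes with the morphisms `μ`. -/
structure IsLayIso {Q R α : Type} {d d' : ℕ} (A : Layered Q α d) (B : Layered R α d')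
    (φ : Q ≃ R) : Prop where
  map_layer : ∀ q, B.layer (φ q) = A.layer q
  map_init : φ A.init = B.init
  map_mu : ∀ q, φ (A.μ q) = B.μ (φ q)
  map_step : ∀ q a, (A.δ q a).map φ = B.δ (φ q) a

/-- `L(⟦A⟧) = L(⟦B⟧)`: the semantics automata (with any choice of initial leaf states
above the respective initial states) accept the same infinite words. -/
def SemLangEq {Q R α : Type} {d d' : ℕ} (A : Layered Q α d) (B : Layered R α d') : Prop :=
  ∀ (p : Q) (q : R), A.IsLeaf p → A.muHat 1 p = A.init → B.IsLeaf q → B.muHat 1 q = B.init →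
    ∀ w : ℕ → α, (A.SemAccept p w ↔ B.SemAccept q w)

/-! ### Deterministic parity automata -/

/-- A deterministic parity automaton over `α` with priorities in `[1,d]`. -/
structure DPA (Q α : Type) (d : ℕ) where
  init : Q
  next : Q → α → Q
  prio : Q → α → ℕ
  prio_pos : ∀ q a, 1 ≤ prio q a
  prio_le : ∀ q a, prio q a ≤ d

namespace DPA

variable {Q α : Type} {d : ℕ}

/-- The unique run of a DPA on an infinite word. -/
def run (B : DPA Q α d) (w : ℕ → α) : ℕ → Q
  | 0 => B.init
  | n + 1 => B.next (run B w n) (w n)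

/-- Acceptance by a DPA: the priorities along the unique run satisfy parity. -/
def Accepts (B : DPA Q α d) (w : ℕ → α) : Prop :=
  ParityAccept (fun i => B.prio (B.run w i) (w i))

end DPA

/-- `L` is ω-regular: recognised by some deterministic parity automaton. -/
def IsOmegaRegular {α : Type} (L : Set (ℕ → α)) : Prop :=
  ∃ (n d : ℕ) (B : DPA (Fin n) α d), ∀ w : ℕ → α, w ∈ L ↔ B.Accepts w

/-! ### Nondeterministic coBüchi automata -/

/-- A (complete) nondeterministic coBüchi automaton: transitions carry priorities in `{1,2}`. -/
structure NCA (Q α : Type) where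
  init : Q
  trans : Q → α → ℕ → Q → Prop
  prio_mem : ∀ q a x q', trans q a x q' → x = 1 ∨ x = 2
  complete : ∀ q a, ∃ x q', trans q a x q'

namespace NCA

variable {Q α : Type}

/-- Nondeterministic acceptance from the state `q`. -/
def AcceptFrom (B : NCA Q α) (q : Q) (w : ℕ → α) : Prop :=
  ∃ (ρ : ℕ → Q) (pri : ℕ → ℕ), ρ 0 = q ∧
    (∀ i : ℕ, B.trans (ρ i) (w i) (pri i) (ρ (i + 1))) ∧ ParityAccept pri

/-- Semantic determinism: every `a`-successor of `p` recognises `a⁻¹ L(p)`. -/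
def SemDet (B : NCA Q α) : Prop :=
  ∀ p a x q, B.trans p a x q →
    ∀ w : ℕ → α, (B.AcceptFrom q w ↔ B.AcceptFrom p (prependW [a] w))

/-- Safe determinism: all `a`-transitions from a state carry the same priority, and
there is at most one `a`-transition of priority `2` from each state. -/
def SafeDet (B : NCA Q α) : Prop :=
  (∀ q a x q' x' q'', B.trans q a x q' → B.trans q a x' q'' → x = x') ∧
  (∀ q a q' q'', B.trans q a 2 q' → B.trans q a 2 q'' → q' = q'')

/-- 1-saturation: priority-1 transitions go to all language-equivalent states. -/
def OneSaturated (B : NCA Q α) : Prop :=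
  ∀ q a p p', B.trans q a 1 p →
    (∀ w : ℕ → α, (B.AcceptFrom p' w ↔ B.AcceptFrom p w)) → B.trans q a 1 p'

end NCA

/-! ### Simple-by-priorities alternating parity automata (abstract) -/

/-- A simple-by-priorities alternating parity automaton: a complete transition system
over `α × [1,d]` in which all `a`-transitions from a state carry the same priority. -/
structure SPA (Q α : Type) (d : ℕ) where
  init : Q
  step : Q → α → Q → Prop
  prio : Q → α → ℕ
  prio_pos : ∀ q a, 1 ≤ prio q a
  prio_le : ∀ q a, prio q a ≤ d
  complete : ∀ q a, ∃ q', step q a q'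

/-! ### The congruence on tuples of finite words -/

/-- The data of the congruence at one level (tuples of a fixed length,
represented as reversed lists of components: the head is the last component). -/
structure CongrLevel (α : Type) where
  bot : List (List α) → Prop
  eq : List (List α) → List (List α) → Prop
  ptd : List (List α) → Prop

/-- Concatenate a finite word to the last component of a tuple
(tuples are represented as reversed lists: the head is the last component). -/
def tcat {α : Type} (t : List (List α)) (v : List α) : List (List α) :=
  match t with
  | h :: rest => (h ++ v) :: rest
  | [] => []

/-- Merge the last two components of a tuple. -/
def tmerge {α : Type} (t : List (List α)) : List (List α) :=
  match t with
  | u' :: h :: rest => (h ++ u') :: rest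
  | t' => t'

/-- The congruence data at level `n` (handling tuples of length `n+1`), defined by
recursion on the level, following the inductive definition of `≈ ⊥`, `≈` and `pointed`. -/
def congrData {α : Type} [Inhabited α] (L : Set (ℕ → α)) : ℕ → CongrLevel α
  | 0 =>
    { bot := fun _ => False
      eq := fun t s =>
        match t, s with
        | [u], [v] => ∀ w : ℕ → α, (prependW u w ∈ L ↔ prependW v w ∈ L)
        | _, _ => False
      ptd := fun _ => True }
  | n + 1 =>
    let C := congrData L n
    let bot : List (List α) → Prop := fun t =>
      match t with
      | u' :: ubar =>
        C.bot (tmerge (u' :: ubar)) ∨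
        ∀ w : List α, w ≠ [] → C.eq (tcat (tmerge (u' :: ubar)) w) ubar →
          ((prependW ubar.reverse.flatten (perWord (u' ++ w)) ∈ L) ↔ Even (n + 1))
      | [] => True
    let eq : List (List α) → List (List α) → Prop := fun t s =>
      C.eq (tmerge t) (tmerge s) ∧ ∀ v : List α, (bot (tcat t v) ↔ bot (tcat s v))
    let ptd : List (List α) → Prop := fun t =>
      match t with
      | u' :: ubar =>
        ¬ bot (u' :: ubar) ∧ C.ptd ubar ∧
        ∀ (vbar : List (List α)) (v' : List α), vbar.length = n + 1 → C.ptd vbar →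
          C.eq (tcat vbar v') ubar → ¬ bot ((v' ++ u') :: vbar) →
          eq ((v' ++ u') :: vbar) (u' :: ubar)
      | [] => False
    { bot := bot, eq := eq, ptd := ptd }

/-- `t ≈ ⊥` (for a nonempty tuple `t`, in reversed representation). -/
def TupBot {α : Type} [Inhabited α] (L : Set (ℕ → α)) (t : List (List α)) : Prop :=
  (congrData L (t.length - 1)).bot t

/-- `t ≈ s` (for nonempty tuples of the same length, in reversed representation). -/
def TupEq {α : Type} [Inhabited α] (L : Set (ℕ → α)) (t s : List (List α)) : Prop :=
  t.length = s.length ∧ (congrData L (t.length - 1)).eq t s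

/-- `t` is pointed. -/
def TupPointed {α : Type} [Inhabited α] (L : Set (ℕ → α)) (t : List (List α)) : Prop :=
  (congrData L (t.length - 1)).ptd t

/-- `cls` exhibits `A` as (a copy of) the congruence automaton `A_≈` of `L`: its states
are the `≈`-classes of pointed tuples (the layer being the tuple length), transitions
are given by concatenation in the last component, the initial state is the class of
`(ε)`, and the morphisms are given by merging the last two components. -/
structure IsCongrAut {α : Type} [Inhabited α] (L : Set (ℕ → α)) {Q : Type} {d : ℕ}
    (A : Layered Q α d) (cls : (t : List (List α)) → TupPointed L t → Q) : Prop where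
  surj : ∀ q : Q, ∃ (t : List (List α)) (ht : TupPointed L t), cls t ht = q
  cls_eq : ∀ t ht s hs, cls t ht = cls s hs ↔ TupEq L t s
  layer_eq : ∀ t ht, A.layer (cls t ht) = t.length
  init_eq : ∀ h : TupPointed L [([] : List α)], cls [([] : List α)] h = A.init
  step_some : ∀ t ht (a : α) (h' : TupPointed L (tcat t [a])),
    A.δ (cls t ht) a = some (cls (tcat t [a]) h')
  step_none : ∀ t ht (a : α), TupBot L (tcat t [a]) → A.δ (cls t ht) a = none
  mu_eq : ∀ (u' : List α) (ubar : List (List α)) (h : TupPointed L (u' :: ubar))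
    (h' : TupPointed L (tmerge (u' :: ubar))), ubar ≠ [] →
    A.μ (cls (u' :: ubar) h) = cls (tmerge (u' :: ubar)) h'

end
noncomputable section
namespace Stmt16Aux
variable {α Q : Type} {d : ℕ}

/-! ### finite-word machinery for a DPA -/

def stF (B : DPA Q α d) (q : Q) (u : List α) : Q := u.foldl B.next q

def prioL (B : DPA Q α d) : Q → List α → List ℕ
  | _, [] => []
  | q, a :: u => B.prio q a :: prioL B (B.next q a) u

def mpD (B : DPA Q α d) (q : Q) (u : List α) : ℕ := (prioL B q u).foldr min (d+1)

def runFrom (B : DPA Q α d) (q : Q) (w : ℕ → α) : ℕ → Q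
  | 0 => q
  | k+1 => B.next (runFrom B q w k) (w k)

def pseq (B : DPA Q α d) (q : Q) (w : ℕ → α) (i : ℕ) : ℕ :=
  B.prio (runFrom B q w i) (w i)

lemma run_eq_runFrom (B : DPA Q α d) (w : ℕ → α) (i : ℕ) :
    B.run w i = runFrom B B.init w i := by
  induction i with
  | zero => rfl
  | succ k ih => simp [DPA.run, runFrom, ih]

lemma stF_append (B : DPA Q α d) (q : Q) (u v : List α) :
    stF B q (u ++ v) = stF B (stF B q u) v := by
  simp [stF, List.foldl_append]

lemma prioL_append (B : DPA Q α d) (q : Q) (u v : List α) :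
    prioL B q (u ++ v) = prioL B q u ++ prioL B (stF B q u) v := by
  induction u generalizing q with
  | nil => simp [prioL, stF]
  | cons a u ih => simp [prioL, ih, stF, List.foldl_cons]

lemma prioL_length (B : DPA Q α d) (q : Q) (u : List α) :
    (prioL B q u).length = u.length := by
  induction u generalizing q with
  | nil => rfl
  | cons a u ih => simp [prioL, ih]

lemma prioL_le (B : DPA Q α d) (q : Q) (u : List α) :
    ∀ x ∈ prioL B q u, x ≤ d := by
  induction u generalizing q with
  | nil => simp [prioL]
  | cons a u ih =>
    intro x hx
    simp only [prioL, List.mem_cons] at hx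
    rcases hx with rfl | hx
    · exact B.prio_le q a
    · exact ih _ x hx

lemma prioL_getElem (B : DPA Q α d) (q : Q) (u : List α) (j : ℕ) (h : j < u.length)
    (h' : j < (prioL B q u).length) :
    (prioL B q u)[j] = B.prio (stF B q (u.take j)) (u[j]) := by
  induction u generalizing q j with
  | nil => simp at h
  | cons a u ih =>
    cases j with
    | zero => simp [prioL, stF]
    | succ j =>
      simp only [prioL, List.getElem_cons_succ, List.take_succ_cons]
      rw [ih]
      · simp [stF]
      · simpa using h

/-! ### foldr min lemmas -/

lemma foldr_min_le_init (l : List ℕ) (c : ℕ) : l.foldr min c ≤ c := by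
  induction l with
  | nil => simp
  | cons x l ih => exact le_trans (min_le_right _ _) ih

lemma foldr_min_init (l : List ℕ) (c M : ℕ) (h : c ≤ M) :
    l.foldr min c = min (l.foldr min M) c := by
  induction l with
  | nil => simp [h]
  | cons x l ih =>
    simp only [List.foldr_cons, ih]
    omega

lemma foldr_min_mem (l : List ℕ) (c : ℕ) : l.foldr min c ∈ l ∨ l.foldr min c = c := by
  induction l with
  | nil => simp
  | cons x l ih =>
    simp only [List.foldr_cons]
    rcases min_choice x (l.foldr min c) with h | h <;> rw [h]
    · exact Or.inl List.mem_cons_self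
    · rcases ih with h' | h'
      · exact Or.inl (List.mem_cons_of_mem _ h')
      · exact Or.inr h'

lemma foldr_min_le_mem (l : List ℕ) (c : ℕ) {x : ℕ} (hx : x ∈ l) : l.foldr min c ≤ x := by
  induction l with
  | nil => simp at hx
  | cons y l ih =>
    simp only [List.mem_cons] at hx
    rcases hx with rfl | hx
    · exact min_le_left _ _
    · exact le_trans (min_le_right _ _) (ih hx)

lemma mpD_le (B : DPA Q α d) (q : Q) (u : List α) : mpD B q u ≤ d + 1 :=
  foldr_min_le_init _ _

lemma mpD_append (B : DPA Q α d) (q : Q) (u v : List α) :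
    mpD B q (u ++ v) = min (mpD B q u) (mpD B (stF B q u) v) := by
  unfold mpD
  rw [prioL_append, List.foldr_append,
    foldr_min_init (prioL B q u) _ (d+1) (foldr_min_le_init _ _)]

end Stmt16Aux
end
noncomputable section
namespace Stmt16Aux
variable {α Q : Type} {d : ℕ}

lemma runFrom_add (B : DPA Q α d) (q : Q) (w : ℕ → α) (m i : ℕ) :
    runFrom B q w (m + i) = runFrom B (runFrom B q w m) (wordDrop w m) i := by
  induction i with
  | zero => rfl
  | succ k ih => simp [runFrom, ih, wordDrop]

lemma pseq_add (B : DPA Q α d) (q : Q) (w : ℕ → α) (m i : ℕ) :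
    pseq B q w (m + i) = pseq B (runFrom B q w m) (wordDrop w m) i := by
  simp [pseq, runFrom_add, wordDrop]

lemma runFrom_eq_stF (B : DPA Q α d) (q : Q) (w : ℕ → α) (m : ℕ) :
    runFrom B q w m = stF B q (wordPrefix w m) := by
  induction m with
  | zero => rfl
  | succ k ih =>
    have : wordPrefix w (k+1) = wordPrefix w k ++ [w k] := by
      unfold wordPrefix
      rw [List.ofFn_succ']
      simp [List.concat_eq_append, Fin.castSucc]
    rw [this, stF_append]
    simp [runFrom, ih, stF]

lemma wordPrefix_prepend {u : List α} {w : ℕ → α} :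
    wordPrefix (prependW u w) u.length = u := by
  apply List.ext_getElem
  · simp [wordPrefix]
  · intro i h1 h2
    simp only [wordPrefix, List.getElem_ofFn]
    show (if h : (i:ℕ) < u.length then u.get ⟨i, h⟩ else w (i - u.length)) = u[i]
    rw [dif_pos h2]
    simp

lemma wordDrop_prepend {u : List α} {w : ℕ → α} :
    wordDrop (prependW u w) u.length = w := by
  funext i
  simp only [wordDrop, prependW]
  rw [dif_neg (by omega)]
  congr 1
  omega

lemma pseq_prepend (B : DPA Q α d) (q : Q) (u : List α) (w : ℕ → α) (i : ℕ) :
    pseq B q (prependW u w) (u.length + i) = pseq B (stF B q u) w i := by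
  rw [pseq_add, runFrom_eq_stF, wordPrefix_prepend, wordDrop_prepend]

/-! ### minInfOften lemmas -/

lemma minInfOften_shift (p : ℕ → ℕ) (N : ℕ) :
    minInfOften p = minInfOften (fun i => p (N + i)) := by
  unfold minInfOften
  congr 1
  ext x
  constructor
  · intro h K
    obtain ⟨n, hn, hpn⟩ := h (N + K)
    refine ⟨n - N, by omega, ?_⟩
    show p (N + (n - N)) = x
    rw [show N + (n - N) = n by omega]; exact hpn
  · intro h K
    obtain ⟨n, hn, hpn⟩ := h K
    exact ⟨N + n, by omega, hpn⟩

lemma exists_infOften (p : ℕ → ℕ) (hpd : ∀ i, p i ≤ d) :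
    {x : ℕ | ∀ K : ℕ, ∃ n : ℕ, K ≤ n ∧ p n = x}.Nonempty := by
  by_contra h
  rw [Set.not_nonempty_iff_eq_empty] at h
  have h' : ∀ x : ℕ, ∃ K, ∀ n, K ≤ n → p n ≠ x := by
    intro x
    have := Set.eq_empty_iff_forall_notMem.mp h x
    simp only [Set.mem_setOf_eq, not_forall] at this
    obtain ⟨K, hK⟩ := this
    exact ⟨K, fun n hn hpn => hK ⟨n, hn, hpn⟩⟩
  choose K hK using h'
  have hfin : (Set.univ : Set ℕ).Finite := by
    apply Set.Finite.subset (Set.Finite.biUnion (Set.finite_Iio (d+1))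
      (fun x _ => Set.finite_Iio (K x)))
    intro n _
    simp only [Set.mem_iUnion, Set.mem_Iio]
    refine ⟨p n, by have := hpd n; omega, ?_⟩
    by_contra hc
    exact hK (p n) n (by omega) rfl
  exact Set.infinite_univ hfin

lemma minInfOften_mem (p : ℕ → ℕ) (hpd : ∀ i, p i ≤ d) :
    ∀ K : ℕ, ∃ n : ℕ, K ≤ n ∧ p n = minInfOften p :=
  Nat.sInf_mem (exists_infOften p hpd)

lemma minInfOften_low_finite (p : ℕ → ℕ) :
    ∃ N : ℕ, ∀ n, N ≤ n → minInfOften p ≤ p n := by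
  have key : ∀ y, y < minInfOften p → ∃ K, ∀ n, K ≤ n → p n ≠ y := by
    intro y hy
    have : y ∉ {x : ℕ | ∀ K : ℕ, ∃ n : ℕ, K ≤ n ∧ p n = x} := by
      intro hmem
      have : minInfOften p ≤ y := Nat.sInf_le hmem
      omega
    simp only [Set.mem_setOf_eq, not_forall] at this
    obtain ⟨K, hK⟩ := this
    exact ⟨K, fun n hn hpn => hK ⟨n, hn, hpn⟩⟩
  choose K hK using key
  refine ⟨Finset.sup (Finset.range (minInfOften p)).attach
    (fun y => K y.1 (Finset.mem_range.mp y.2)), ?_⟩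
  intro n hn
  by_contra hc
  push_neg at hc
  refine hK (p n) hc n ?_ rfl
  exact le_trans (Finset.le_sup (f := fun y : {x // x ∈ Finset.range (minInfOften p)} =>
    K y.1 (Finset.mem_range.mp y.2)) (Finset.mem_attach _ ⟨p n, Finset.mem_range.mpr hc⟩)) hn

lemma minInfOften_blocks (p m : ℕ → ℕ) (c : ℕ) (hc : 1 ≤ c) (hpd : ∀ i, p i ≤ d)
    (H1 : ∀ k, ∃ j, j < c ∧ p (k * c + j) = m k)
    (H2 : ∀ k j, j < c → m k ≤ p (k * c + j)) :
    minInfOften p = minInfOften m := by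
  have hmd : ∀ k, m k ≤ d := by
    intro k
    obtain ⟨j, hj, hpj⟩ := H1 k
    rw [← hpj]; exact hpd _
  have hsub : {x : ℕ | ∀ K : ℕ, ∃ n : ℕ, K ≤ n ∧ m n = x} ⊆
      {x : ℕ | ∀ K : ℕ, ∃ n : ℕ, K ≤ n ∧ p n = x} := by
    intro x hx K
    obtain ⟨k, hk, hmk⟩ := hx K
    obtain ⟨j, hj, hpj⟩ := H1 k
    refine ⟨k * c + j, ?_, by rw [hpj, hmk]⟩
    calc K ≤ k := hk
      _ ≤ k * c := Nat.le_mul_of_pos_right _ hc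
      _ ≤ k * c + j := Nat.le_add_right _ _
  have hple : minInfOften p ≤ minInfOften m :=
    le_trans (Nat.sInf_le (hsub (Nat.sInf_mem (exists_infOften m hmd)))) (le_refl _)
  -- converse: minInfOften p ∈ inf-often values of m
  obtain ⟨N, hN⟩ := minInfOften_low_finite p
  have hmem : minInfOften p ∈ {x : ℕ | ∀ K : ℕ, ∃ n : ℕ, K ≤ n ∧ m n = x} := by
    intro K
    obtain ⟨n, hn, hpn⟩ := minInfOften_mem p hpd (c * (K + N))
    refine ⟨n / c, ?_, ?_⟩
    · have := Nat.div_le_div_right (c := c) hn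
      rw [Nat.mul_div_cancel_left _ hc] at this
      omega
    · have hmod : n / c * c + n % c = n := by
        rw [Nat.mul_comm]
        exact Nat.div_add_mod n c
      apply le_antisymm
      · calc m (n / c) ≤ p (n / c * c + n % c) := H2 _ _ (Nat.mod_lt _ hc)
          _ = p n := by rw [hmod]
          _ = minInfOften p := hpn
      · obtain ⟨j, hj, hpj⟩ := H1 (n / c)
        rw [← hpj]
        apply hN
        have h1 : K + N ≤ n / c := by
          have := Nat.div_le_div_right (c := c) hn
          rw [Nat.mul_div_cancel_left _ hc] at this
          omega
        calc N ≤ n / c := by omega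
          _ ≤ n / c * c := Nat.le_mul_of_pos_right _ hc
          _ ≤ n / c * c + j := Nat.le_add_right _ _
  exact le_antisymm hple (Nat.sInf_le hmem)

end Stmt16Aux
end
noncomputable section
namespace Stmt16Aux
variable {α Q : Type} {d : ℕ} [Inhabited α]

lemma perWord_lt {z : List α} (i : ℕ) (h : i < z.length) : perWord z i = z[i] := by
  simp only [perWord]
  rw [Nat.mod_eq_of_lt h, List.getD_eq_getElem _ _ h]

lemma wordDrop_perWord {z : List α} (hz : z ≠ []) :
    wordDrop (perWord z) z.length = perWord z := by
  funext i
  simp only [wordDrop, perWord, Nat.add_mod_left]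

lemma wordPrefix_perWord {z : List α} (j : ℕ) (h : j ≤ z.length) :
    wordPrefix (perWord z) j = z.take j := by
  apply List.ext_getElem
  · simp [wordPrefix]; omega
  · intro i h1 h2
    simp only [wordPrefix, List.getElem_ofFn, List.getElem_take]
    simp only [wordPrefix, List.length_ofFn] at h1
    exact perWord_lt i (by omega)

lemma pseq_per_block (B : DPA Q α d) (z : List α) (hz : z ≠ []) (q : Q) (k i : ℕ) :
    pseq B q (perWord z) (k * z.length + i) =
      pseq B ((fun q => stF B q z)^[k] q) (perWord z) i := by
  induction k generalizing q with
  | zero => simp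
  | succ k ih =>
    have harith : (k+1) * z.length + i = z.length + (k * z.length + i) := by ring
    rw [harith, pseq_add, runFrom_eq_stF,
      wordPrefix_perWord _ (le_refl _), List.take_length, wordDrop_perWord hz,
      ih (stF B q z), Function.iterate_succ_apply]

lemma pseq_per_lt (B : DPA Q α d) (z : List α) (q : Q) (i : ℕ) (h : i < z.length) :
    pseq B q (perWord z) i = (prioL B q z)[i]'(by rw [prioL_length]; exact h) := by
  rw [prioL_getElem B q z i h]
  simp only [pseq, runFrom_eq_stF, wordPrefix_perWord _ (le_of_lt h)]
  rw [perWord_lt i h]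

/-- Key evaluation: acceptance of an ultimately periodic word u · z^ω
is determined by `stF B.init u`, `fun q => stF B q z` and `fun q => mpD B q z`. -/
lemma accepts_per (B : DPA Q α d) (u z : List α) (hz : z ≠ []) :
    B.Accepts (prependW u (perWord z)) ↔
      Even (minInfOften (fun k => mpD B ((fun q => stF B q z)^[k] (stF B B.init u)) z)) := by
  have hc : 1 ≤ z.length := List.length_pos_iff.mpr hz
  have hrw : (fun i => B.prio (B.run (prependW u (perWord z)) i) (prependW u (perWord z) i))
      = pseq B B.init (prependW u (perWord z)) := by
    funext i; simp [pseq, run_eq_runFrom]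
  rw [DPA.Accepts, ParityAccept, hrw,
    minInfOften_shift _ u.length]
  have hsh : (fun i => pseq B B.init (prependW u (perWord z)) (u.length + i))
      = pseq B (stF B B.init u) (perWord z) := by
    funext i; rw [pseq_prepend]
  rw [hsh]
  set q0 := stF B B.init u
  have hblocks : minInfOften (pseq B q0 (perWord z)) =
      minInfOften (fun k => mpD B ((fun q => stF B q z)^[k] q0) z) := by
    apply minInfOften_blocks _ _ z.length hc
    · intro i; exact B.prio_le _ _
    · intro k
      set qk := (fun q => stF B q z)^[k] q0
      have hne : prioL B qk z ≠ [] := by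
        intro h
        have := prioL_length B qk z
        rw [h] at this
        simp at this
        omega
      have hmem : mpD B qk z ∈ prioL B qk z := by
        rcases foldr_min_mem (prioL B qk z) (d+1) with h | h
        · exact h
        · exfalso
          obtain ⟨a, ha⟩ := List.exists_mem_of_ne_nil _ hne
          have h1 : mpD B qk z ≤ a := foldr_min_le_mem _ _ ha
          have h2 : a ≤ d := prioL_le B qk z a ha
          have h3 : mpD B qk z = d + 1 := h
          omega
      obtain ⟨j, hj, hja⟩ := List.getElem_of_mem hmem
      refine ⟨j, by rwa [prioL_length] at hj, ?_⟩
      rw [pseq_per_block B z hz q0 k j, pseq_per_lt B z _ j (by rwa [prioL_length] at hj)]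
      exact hja
    · intro k j hj
      rw [pseq_per_block B z hz q0 k j, pseq_per_lt B z _ j hj]
      exact foldr_min_le_mem _ _ (List.getElem_mem _)
  rw [hblocks]

/-! ### signatures -/

def sigs (B : DPA Q α d) (u : List α) : (Q → Q) × (Q → ℕ) :=
  (fun q => stF B q u, fun q => mpD B q u)

lemma sigs_append (B : DPA Q α d) {u₁ u₂ v₁ v₂ : List α}
    (hu : sigs B u₁ = sigs B u₂) (hv : sigs B v₁ = sigs B v₂) :
    sigs B (u₁ ++ v₁) = sigs B (u₂ ++ v₂) := by
  have hu1 : (fun q => stF B q u₁) = fun q => stF B q u₂ := congrArg Prod.fst hu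
  have hu2 : (fun q => mpD B q u₁) = fun q => mpD B q u₂ := congrArg Prod.snd hu
  have hv1 : (fun q => stF B q v₁) = fun q => stF B q v₂ := congrArg Prod.fst hv
  have hv2 : (fun q => mpD B q v₁) = fun q => mpD B q v₂ := congrArg Prod.snd hv
  unfold sigs
  congr 1 <;> funext q
  · rw [stF_append, stF_append, congrFun hu1 q, congrFun hv1 _]
  · rw [mpD_append, mpD_append, congrFun hu1 q, congrFun hu2 q, congrFun hv2 _]

lemma sigs_flatten (B : DPA Q α d) {l₁ l₂ : List (List α)}
    (h : l₁.map (sigs B) = l₂.map (sigs B)) :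
    sigs B l₁.flatten = sigs B l₂.flatten := by
  induction l₁ generalizing l₂ with
  | nil => cases l₂ with
    | nil => rfl
    | cons b l₂ => simp at h
  | cons a l₁ ih =>
    cases l₂ with
    | nil => simp at h
    | cons b l₂ =>
      simp only [List.map_cons, List.cons.injEq] at h
      simp only [List.flatten_cons]
      exact sigs_append B h.1 (ih h.2)

/-- Base semantic lemma. -/
lemma accepts_prepend_congr (B : DPA Q α d) {u v : List α}
    (h : sigs B u = sigs B v) (w : ℕ → α) :
    B.Accepts (prependW u w) ↔ B.Accepts (prependW v w) := by
  have hst : stF B B.init u = stF B B.init v :=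
    congrFun (congrArg Prod.fst h) B.init
  have key : ∀ u' : List α, B.Accepts (prependW u' w) ↔
      Even (minInfOften (pseq B (stF B B.init u') w)) := by
    intro u'
    have hrw : (fun i => B.prio (B.run (prependW u' w) i) (prependW u' w i))
        = pseq B B.init (prependW u' w) := by
      funext i; simp [pseq, run_eq_runFrom]
    rw [DPA.Accepts, ParityAccept, hrw, minInfOften_shift _ u'.length]
    have hsh : (fun i => pseq B B.init (prependW u' w) (u'.length + i))
        = pseq B (stF B B.init u') w := by
      funext i; rw [pseq_prepend]
    rw [hsh]
  rw [key u, key v, hst]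

/-- Key periodic-word lemma. -/
lemma accepts_per_congr (B : DPA Q α d) {u₁ u₂ z₁ z₂ : List α}
    (hu : sigs B u₁ = sigs B u₂) (hz : sigs B z₁ = sigs B z₂)
    (h₁ : z₁ ≠ []) (h₂ : z₂ ≠ []) :
    B.Accepts (prependW u₁ (perWord z₁)) ↔ B.Accepts (prependW u₂ (perWord z₂)) := by
  rw [accepts_per B u₁ z₁ h₁, accepts_per B u₂ z₂ h₂]
  have hst : stF B B.init u₁ = stF B B.init u₂ := congrFun (congrArg Prod.fst hu) B.init
  have hz1 : (fun q => stF B q z₁) = fun q => stF B q z₂ := congrArg Prod.fst hz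
  have hz2 : (fun q => mpD B q z₁) = fun q => mpD B q z₂ := congrArg Prod.snd hz
  rw [hst, hz1]
  have hfun : (fun k => mpD B ((fun q => stF B q z₂)^[k] (stF B B.init u₂)) z₁)
      = (fun k => mpD B ((fun q => stF B q z₂)^[k] (stF B B.init u₂)) z₂) := by
    funext k; exact congrFun hz2 _
  rw [hfun]

end Stmt16Aux
end
noncomputable section
namespace Stmt16Aux
variable {α : Type} [Inhabited α] {L : Set (ℕ → α)}

lemma congrData_zero_bot (t : List (List α)) : ¬ (congrData L 0).bot t := fun h => h

lemma congrData_succ_bot (n : ℕ) (u' : List α) (ubar : List (List α)) :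
    (congrData L (n+1)).bot (u' :: ubar) ↔
      ((congrData L n).bot (tmerge (u' :: ubar)) ∨
        ∀ w : List α, w ≠ [] → (congrData L n).eq (tcat (tmerge (u' :: ubar)) w) ubar →
          ((prependW ubar.reverse.flatten (perWord (u' ++ w)) ∈ L) ↔ Even (n + 1))) :=
  Iff.rfl

lemma congrData_succ_eq (n : ℕ) (t s : List (List α)) :
    (congrData L (n+1)).eq t s ↔
      ((congrData L n).eq (tmerge t) (tmerge s) ∧
        ∀ v : List α, ((congrData L (n+1)).bot (tcat t v) ↔ (congrData L (n+1)).bot (tcat s v))) :=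
  Iff.rfl

lemma congrData_zero_eq (u v : List α) :
    (congrData L 0).eq [u] [v] ↔ ∀ w : ℕ → α, (prependW u w ∈ L ↔ prependW v w ∈ L) :=
  Iff.rfl

lemma congrData_eq_symm : ∀ (n : ℕ) (t s : List (List α)),
    (congrData L n).eq t s → (congrData L n).eq s t := by
  intro n
  induction n with
  | zero =>
    rintro (_ | ⟨u, _ | ⟨u2, t⟩⟩) (_ | ⟨v, _ | ⟨v2, s⟩⟩) h <;>
      first
        | exact h
        | exact h.elim
        | (intro w; exact (h w).symm)
  | succ n ih =>
    intro t s h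
    rw [congrData_succ_eq] at h ⊢
    exact ⟨ih _ _ h.1, fun v => (h.2 v).symm⟩

lemma congrData_eq_trans : ∀ (n : ℕ) (t s r : List (List α)),
    (congrData L n).eq t s → (congrData L n).eq s r → (congrData L n).eq t r := by
  intro n
  induction n with
  | zero =>
    rintro (_ | ⟨u, _ | ⟨u2, t⟩⟩) (_ | ⟨v, _ | ⟨v2, s⟩⟩) (_ | ⟨x, _ | ⟨x2, r⟩⟩) h h' <;>
      first
        | exact h
        | exact h'
        | exact h.elim
        | exact h'.elim
        | (intro w; exact (h w).trans (h' w))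
  | succ n ih =>
    intro t s r h h'
    rw [congrData_succ_eq] at h h' ⊢
    exact ⟨ih _ _ _ h.1 h'.1, fun v => (h.2 v).trans (h'.2 v)⟩

end Stmt16Aux
end
noncomputable section
namespace Stmt16Aux
variable {α : Type} [Inhabited α]

lemma len_succ {β : Type} (t : List β) (n : ℕ) (h : t.length = n+1) :
    ∃ a l, t = a :: l ∧ l.length = n := by
  rcases t with _ | ⟨a, l⟩
  · simp_all
  · exact ⟨a, l, rfl, by simpa using h⟩

lemma len_succ2 {β : Type} (t : List β) (n : ℕ) (h : t.length = n+2) :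
    ∃ a b l, t = a :: b :: l ∧ l.length = n := by
  rcases t with _ | ⟨a, _ | ⟨b, l⟩⟩
  · simp_all
  · simp_all
  · exact ⟨a, b, l, rfl, by simpa using h⟩

lemma main_congr {L : Set (ℕ → α)} {N d : ℕ}
    (B : DPA (Fin N) α d) (hB : ∀ w, w ∈ L ↔ B.Accepts w) : ∀ n : ℕ,
    (∀ t s : List (List α), t.length = n+1 → s.length = n+1 →
      t.map (sigs B) = s.map (sigs B) →
      ((congrData L n).bot t ↔ (congrData L n).bot s)) ∧
    (∀ t s : List (List α), t.length = n+1 → s.length = n+1 →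
      t.map (sigs B) = s.map (sigs B) →
      (congrData L n).eq t s) := by
  intro n
  induction n with
  | zero =>
    constructor
    · intro t s _ _ _
      exact iff_of_false (congrData_zero_bot t) (congrData_zero_bot s)
    · intro t s ht hs hmap
      obtain ⟨u, t', rfl, ht'⟩ := len_succ t 0 ht
      obtain ⟨v, s', rfl, hs'⟩ := len_succ s 0 hs
      rw [List.length_eq_zero_iff] at ht' hs'
      subst ht'; subst hs'
      simp only [List.map_cons, List.map_nil, List.cons.injEq, and_true] at hmap
      rw [congrData_zero_eq]
      intro w
      rw [hB, hB]
      exact accepts_prepend_congr B hmap w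
  | succ n ih =>
    obtain ⟨ihbot, iheq⟩ := ih
    have hbot : ∀ t s : List (List α), t.length = n+2 → s.length = n+2 →
        t.map (sigs B) = s.map (sigs B) →
        ((congrData L (n+1)).bot t ↔ (congrData L (n+1)).bot s) := by
      intro t s ht hs hmap
      obtain ⟨u', u2, ur, rfl, hur⟩ := len_succ2 t n ht
      obtain ⟨v', v2, vr, rfl, hvr⟩ := len_succ2 s n hs
      simp only [List.map_cons, List.cons.injEq] at hmap
      obtain ⟨h1, h2, h3⟩ := hmap
      have hmerge_map : (tmerge (u' :: u2 :: ur)).map (sigs B)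
          = (tmerge (v' :: v2 :: vr)).map (sigs B) := by
        simp only [tmerge, List.map_cons]
        rw [sigs_append B h2 h1, h3]
      have hflat : sigs B (u2 :: ur).reverse.flatten = sigs B (v2 :: vr).reverse.flatten := by
        apply sigs_flatten
        rw [List.map_reverse, List.map_reverse, List.map_cons, List.map_cons, h2, h3]
      rw [congrData_succ_bot, congrData_succ_bot]
      apply or_congr
      · exact ihbot _ _ (by simp [tmerge, hur]) (by simp [tmerge, hvr]) hmerge_map
      · have heqiff : ∀ w : List α,
            ((congrData L n).eq (tcat (tmerge (u' :: u2 :: ur)) w) (u2 :: ur) ↔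
             (congrData L n).eq (tcat (tmerge (v' :: v2 :: vr)) w) (v2 :: vr)) := by
          intro w
          have e1 : (congrData L n).eq (tcat (tmerge (u' :: u2 :: ur)) w)
              (tcat (tmerge (v' :: v2 :: vr)) w) := by
            apply iheq
            · simp [tmerge, tcat, hur]
            · simp [tmerge, tcat, hvr]
            · simp only [tmerge, tcat, List.map_cons]
              rw [sigs_append B (sigs_append B h2 h1) (rfl : sigs B w = sigs B w), h3]
          have e2 : (congrData L n).eq (u2 :: ur) (v2 :: vr) := by
            apply iheq
            · simp [hur]
            · simp [hvr]
            · rw [List.map_cons, List.map_cons, h2, h3]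
          constructor
          · intro h
            exact congrData_eq_trans _ _ _ _ (congrData_eq_symm _ _ _ e1)
              (congrData_eq_trans _ _ _ _ h e2)
          · intro h
            exact congrData_eq_trans _ _ _ _ e1
              (congrData_eq_trans _ _ _ _ h (congrData_eq_symm _ _ _ e2))
        have hmemiff : ∀ w : List α, w ≠ [] →
            ((prependW (u2 :: ur).reverse.flatten (perWord (u' ++ w)) ∈ L) ↔
             (prependW (v2 :: vr).reverse.flatten (perWord (v' ++ w)) ∈ L)) := by
          intro w hw
          rw [hB, hB]
          exact accepts_per_congr B hflat
            (sigs_append B h1 (rfl : sigs B w = sigs B w))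
            (by simp [hw]) (by simp [hw])
        constructor
        · intro h w hw he
          rw [← hmemiff w hw]
          exact h w hw ((heqiff w).mpr he)
        · intro h w hw he
          rw [hmemiff w hw]
          exact h w hw ((heqiff w).mp he)
    refine ⟨hbot, ?_⟩
    intro t s ht hs hmap
    obtain ⟨u', u2, ur, rfl, hur⟩ := len_succ2 t n ht
    obtain ⟨v', v2, vr, rfl, hvr⟩ := len_succ2 s n hs
    simp only [List.map_cons, List.cons.injEq] at hmap
    obtain ⟨h1, h2, h3⟩ := hmap
    rw [congrData_succ_eq]
    constructor
    · apply iheq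
      · simp [tmerge, hur]
      · simp [tmerge, hvr]
      · simp only [tmerge, List.map_cons]
        rw [sigs_append B h2 h1, h3]
    · intro v
      apply hbot
      · simp [tcat, hur]
      · simp [tcat, hvr]
      · simp only [tcat, List.map_cons]
        rw [sigs_append B h1 (rfl : sigs B v = sigs B v), h2, h3]

end Stmt16Aux
end
noncomputable section
namespace Stmt16Aux
variable {α : Type} [Inhabited α]

lemma tupEq_congr {L : Set (ℕ → α)} {t t' : List (List α)} {n : ℕ}
    (ht : t.length = n+1) (ht' : t'.length = n+1)
    (h : (congrData L n).eq t' t) (s : List (List α)) :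
    TupEq L t' s ↔ TupEq L t s := by
  unfold TupEq
  rw [ht, ht']
  simp only [Nat.add_sub_cancel]
  constructor
  · rintro ⟨hls, he⟩
    exact ⟨by omega, congrData_eq_trans _ _ _ _ (congrData_eq_symm _ _ _ h) he⟩
  · rintro ⟨hls, he⟩
    exact ⟨by omega, congrData_eq_trans _ _ _ _ h he⟩

end Stmt16Aux


end

/-- For an ω-regular language `L` and every `x ≥ 1`, the congruence `≈`
has finite index on `(Σ*)^x`: there are only finitely many `≈`-classes of `x`-tuples. -/
theorem statement_16 {α : Type} [Fintype α] [Inhabited α]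
    (L : Set (ℕ → α)) (hL : IsOmegaRegular L) (x : ℕ) (hx : 1 ≤ x) :
    {C : Set (List (List α)) | ∃ t : List (List α), t.length = x ∧
        C = {s : List (List α) | s.length = x ∧ TupEq L t s}}.Finite := by
  classical
  obtain ⟨N, d, B, hB⟩ := hL
  obtain ⟨n, rfl⟩ : ∃ n, x = n + 1 := ⟨x - 1, by omega⟩
  set g : List α → (Fin N → Fin N) × (Fin N → Fin (d+2)) := fun u =>
    ((Stmt16Aux.sigs B u).1, fun q => ⟨min ((Stmt16Aux.sigs B u).2 q) (d+1), by omega⟩) with hg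
  have g_sig : ∀ u v : List α, g u = g v → Stmt16Aux.sigs B u = Stmt16Aux.sigs B v := by
    intro u v h
    have h1 := congrArg Prod.fst h
    have h2 := congrArg Prod.snd h
    simp only [hg] at h1 h2
    refine Prod.ext h1 ?_
    funext q
    have h3 := congrArg (fun f => ((f q : Fin (d+2)) : ℕ)) h2
    simp only at h3
    have hu := Stmt16Aux.mpD_le B q u
    have hv := Stmt16Aux.mpD_le B q v
    show Stmt16Aux.mpD B q u = Stmt16Aux.mpD B q v
    have hu' : (Stmt16Aux.sigs B u).2 q = Stmt16Aux.mpD B q u := rfl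
    have hv' : (Stmt16Aux.sigs B v).2 q = Stmt16Aux.mpD B q v := rfl
    rw [hu', hv'] at h3
    omega
  have gmap_sig : ∀ l₁ l₂ : List (List α), l₁.map g = l₂.map g →
      l₁.map (Stmt16Aux.sigs B) = l₂.map (Stmt16Aux.sigs B) := by
    intro l₁
    induction l₁ with
    | nil =>
      intro l₂ h
      cases l₂ with
      | nil => rfl
      | cons b l₂ => simp at h
    | cons a l ih =>
      intro l₂ h
      cases l₂ with
      | nil => simp at h
      | cons b l₂ =>
        simp only [List.map_cons, List.cons.injEq] at h ⊢
        exact ⟨g_sig _ _ h.1, ih _ h.2⟩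
  set F : (Fin (n+1) → (Fin N → Fin N) × (Fin N → Fin (d+2))) → Set (List (List α)) :=
    fun f =>
      if h : ∃ t : List (List α), t.length = n+1 ∧ t.map g = List.ofFn f then
        {s : List (List α) | s.length = n+1 ∧ TupEq L h.choose s}
      else ∅ with hF
  apply Set.Finite.subset (Set.finite_range F)
  rintro C ⟨t, htl, rfl⟩
  refine ⟨fun i => g (t.get (Fin.cast htl.symm i)), ?_⟩
  have hofn : t.map g = List.ofFn (fun i => g (t.get (Fin.cast htl.symm i))) := by
    apply List.ext_getElem
    · simp [htl]
    · intro i hi1 hi2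
      rw [List.getElem_map, List.getElem_ofFn]
      rfl
  have hex : ∃ t' : List (List α), t'.length = n+1 ∧
      t'.map g = List.ofFn (fun i => g (t.get (Fin.cast htl.symm i))) := ⟨t, htl, hofn⟩
  rw [hF]
  simp only []
  rw [dif_pos hex]
  obtain ⟨ht'l, ht'map⟩ := hex.choose_spec
  have hsig : hex.choose.map (Stmt16Aux.sigs B) = t.map (Stmt16Aux.sigs B) :=
    gmap_sig _ _ (by rw [ht'map, hofn])
  have heq : (congrData L n).eq hex.choose t :=
    (Stmt16Aux.main_congr B hB n).2 hex.choose t ht'l htl hsig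
  ext s
  simp only [Set.mem_setOf_eq]
  constructor
  · rintro ⟨hsl, hse⟩
    exact ⟨hsl, (Stmt16Aux.tupEq_congr htl ht'l heq s).mp hse⟩
  · rintro ⟨hsl, hse⟩
    exact ⟨hsl, (Stmt16Aux.tupEq_congr htl ht'l heq s).mpr hse⟩
end

section
/- Let Σ be a finite alphabet and let L ⊆ Σ^ω be recognised by a deterministic parity automaton with priorities in [d] = {1,…,d}. Then every tuple ū ∈ (Σ*)^{d+1} of d+1 finite words satisfies ū ≈ ⊥ (and hence so does every longer tuple). -/
open scoped Classical

set_option linter.unusedSectionVars false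
section S17aux
variable {α : Type} [Inhabited α] (L : Set (ℕ → α))

/-- run of prepend decomposition -/
theorem prependW_append (u v : List α) (w : ℕ → α) :
    prependW (u ++ v) w = prependW u (prependW v w) := by
  funext i
  simp only [prependW, List.length_append]
  by_cases h1 : i < u.length
  · rw [dif_pos (by omega), dif_pos h1]
    simp [List.getElem_append, h1]
  · rw [dif_neg h1]
    by_cases h2 : i < u.length + v.length
    · rw [dif_pos h2, dif_pos (by omega)]
      simp only [List.get_eq_getElem]
      rw [List.getElem_append_right (by omega)]
    · rw [dif_neg h2, dif_neg (by omega)]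
      congr 1
      omega

theorem tmerge_tcat (t : List (List α)) (v : List α) :
    tmerge (tcat t v) = tcat (tmerge t) v := by
  rcases t with _ | ⟨h, _ | ⟨g, r⟩⟩ <;> simp [tcat, tmerge]

theorem tcat_tcat (t : List (List α)) (u v : List α) :
    tcat (tcat t u) v = tcat t (u ++ v) := by
  rcases t with _ | ⟨h, r⟩ <;> simp [tcat]

theorem tcat_nil (t : List (List α)) : tcat t [] = t := by
  rcases t with _ | ⟨h, r⟩ <;> simp [tcat]

theorem flatten_tcat (t : List (List α)) (v : List α) (ht : t ≠ []) :
    (tcat t v).reverse.flatten = t.reverse.flatten ++ v := by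
  rcases t with _ | ⟨h, r⟩
  · exact absurd rfl ht
  · simp [tcat]

theorem flatten_cons (x : List α) (t : List (List α)) :
    ((x :: t) : List (List α)).reverse.flatten = t.reverse.flatten ++ x := by
  simp

theorem flatten_tmerge (t : List (List α)) :
    (tmerge t).reverse.flatten = t.reverse.flatten := by
  rcases t with _ | ⟨h, _ | ⟨g, r⟩⟩ <;> simp [tmerge]

theorem tmerge_cons (v : List α) (t : List (List α)) (ht : t ≠ []) :
    tmerge (v :: t) = tcat t v := by
  rcases t with _ | ⟨h, r⟩
  · exact absurd rfl ht
  · simp [tmerge, tcat]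

theorem botS {n : ℕ} (u' : List α) (ubar : List (List α)) :
    (congrData L (n+1)).bot (u' :: ubar) ↔
      ((congrData L n).bot (tmerge (u' :: ubar)) ∨
        ∀ w : List α, w ≠ [] → (congrData L n).eq (tcat (tmerge (u' :: ubar)) w) ubar →
          ((prependW ubar.reverse.flatten (perWord (u' ++ w)) ∈ L) ↔ Even (n + 1))) :=
  Iff.rfl

theorem eqS {n : ℕ} (t s : List (List α)) :
    (congrData L (n+1)).eq t s ↔
      ((congrData L n).eq (tmerge t) (tmerge s) ∧
        ∀ v : List α, ((congrData L (n+1)).bot (tcat t v) ↔ (congrData L (n+1)).bot (tcat s v))) :=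
  Iff.rfl

theorem eq0 (u v : List α) :
    (congrData L 0).eq [u] [v] ↔ ∀ w : ℕ → α, (prependW u w ∈ L ↔ prependW v w ∈ L) :=
  Iff.rfl

end S17aux
section S17b
variable {α : Type} [Inhabited α] (L : Set (ℕ → α))

theorem tcat_cons (v z : List α) (A : List (List α)) : tcat (v :: A) z = (v ++ z) :: A := rfl

theorem eq0_shape {t s : List (List α)} (h : (congrData L 0).eq t s) :
    ∃ u v, t = [u] ∧ s = [v] := by
  rcases t with _ | ⟨u, _ | ⟨u2, t⟩⟩ <;> rcases s with _ | ⟨v, _ | ⟨v2, s⟩⟩ <;>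
    first
      | exact ⟨u, v, rfl, rfl⟩
      | exact (show False from h).elim

theorem eq_ne_nil : ∀ {n : ℕ} {t s : List (List α)}, (congrData L n).eq t s → t ≠ [] ∧ s ≠ []
  | 0, t, s, h => by
    obtain ⟨u, v, rfl, rfl⟩ := eq0_shape L h
    simp
  | n+1, t, s, h => by
    obtain ⟨ht, hs⟩ := eq_ne_nil (n := n) h.1
    constructor
    · rintro rfl; exact ht rfl
    · rintro rfl; exact hs rfl

theorem eq_symm : ∀ {n : ℕ} {t s : List (List α)}, (congrData L n).eq t s → (congrData L n).eq s t
  | 0, t, s, h => by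
    obtain ⟨u, v, rfl, rfl⟩ := eq0_shape L h
    rw [eq0] at h ⊢
    exact fun w => (h w).symm
  | n+1, t, s, h => ⟨eq_symm h.1, fun v => (h.2 v).symm⟩

theorem eq_trans : ∀ {n : ℕ} {t s r : List (List α)},
    (congrData L n).eq t s → (congrData L n).eq s r → (congrData L n).eq t r
  | 0, t, s, r, h, h' => by
    obtain ⟨u, v, rfl, rfl⟩ := eq0_shape L h
    obtain ⟨v', x, hv, rfl⟩ := eq0_shape L h'
    injection hv with h1 h2
    subst h1
    rw [eq0] at h h' ⊢
    exact fun w => (h w).trans (h' w)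
  | n+1, t, s, r, h, h' => ⟨eq_trans h.1 h'.1, fun v => (h.2 v).trans (h'.2 v)⟩

theorem eq_tcat : ∀ {n : ℕ} {t s : List (List α)} (v : List α),
    (congrData L n).eq t s → (congrData L n).eq (tcat t v) (tcat s v)
  | 0, t, s, v, h => by
    obtain ⟨u, u', rfl, rfl⟩ := eq0_shape L h
    rw [eq0] at h
    show (congrData L 0).eq [u ++ v] [u' ++ v]
    rw [eq0]
    intro w
    rw [prependW_append, prependW_append]
    exact h _
  | n+1, t, s, v, h => by
    rw [eqS] at h ⊢
    refine ⟨?_, fun z => ?_⟩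
    · rw [tmerge_tcat, tmerge_tcat]
      exact eq_tcat v h.1
    · rw [tcat_tcat, tcat_tcat]
      exact h.2 (v ++ z)

theorem eq_bot_congr {n : ℕ} {t s : List (List α)} (h : (congrData L n).eq t s) :
    ((congrData L n).bot t ↔ (congrData L n).bot s) := by
  cases n with
  | zero => exact Iff.rfl
  | succ n =>
    have := h.2 []
    rwa [tcat_nil, tcat_nil] at this

theorem eq_flatten : ∀ {n : ℕ} {t s : List (List α)}, (congrData L n).eq t s →
    ∀ w : ℕ → α, (prependW t.reverse.flatten w ∈ L ↔ prependW s.reverse.flatten w ∈ L)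
  | 0, t, s, h => by
    obtain ⟨u, v, rfl, rfl⟩ := eq0_shape L h
    rw [eq0] at h
    simpa using h
  | n+1, t, s, h => by
    have := eq_flatten h.1
    rwa [flatten_tmerge, flatten_tmerge] at this

theorem bot_tcat : ∀ {n : ℕ} {t : List (List α)} (v : List α),
    (congrData L n).bot t → (congrData L n).bot (tcat t v)
  | 0, t, v, h => (show False from h).elim
  | n+1, t, v, h => by
    rcases t with _ | ⟨u', ubar⟩
    · exact h
    · rw [botS] at h
      rw [tcat_cons, botS]
      rcases h with h | h
      · left
        have h2 := bot_tcat v h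
        rw [← tmerge_tcat] at h2
        exact h2
      · right
        intro w hw heq
        rw [show ((u' ++ v) :: ubar) = tcat (u' :: ubar) v from rfl, tmerge_tcat,
          tcat_tcat] at heq
        have := h (v ++ w) (by simp [hw]) heq
        rwa [List.append_assoc]

theorem bot_newcomp {n : ℕ} {A A' : List (List α)} (h : (congrData L n).eq A A') (u : List α) :
    ((congrData L (n+1)).bot (u :: A) ↔ (congrData L (n+1)).bot (u :: A')) := by
  obtain ⟨hA, hA'⟩ := eq_ne_nil L h
  rw [botS, botS, tmerge_cons _ _ hA, tmerge_cons _ _ hA']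
  refine or_congr (eq_bot_congr L (eq_tcat L u h)) (forall_congr' fun w => imp_congr_right fun hw => ?_)
  rw [tcat_tcat, tcat_tcat]
  constructor
  · intro h1 h2
    have h3 : (congrData L n).eq (tcat A (u ++ w)) A :=
      eq_trans L (eq_trans L (eq_tcat L (u ++ w) h) h2) (eq_symm L h)
    rw [← eq_flatten L h (perWord (u ++ w))]
    exact h1 h3
  · intro h1 h2
    have h3 : (congrData L n).eq (tcat A' (u ++ w)) A' :=
      eq_trans L (eq_trans L (eq_symm L (eq_tcat L (u ++ w) h)) h2) h
    rw [eq_flatten L h (perWord (u ++ w))]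
    exact h1 h3

theorem eq_newcomp {n : ℕ} {A A' : List (List α)} (h : (congrData L n).eq A A') (v : List α) :
    (congrData L (n+1)).eq (v :: A) (v :: A') := by
  obtain ⟨hA, hA'⟩ := eq_ne_nil L h
  rw [eqS]
  refine ⟨?_, fun z => ?_⟩
  · rw [tmerge_cons _ _ hA, tmerge_cons _ _ hA']
    exact eq_tcat L v h
  · rw [tcat_cons, tcat_cons]
    exact bot_newcomp L h (v ++ z)

end S17b
section S17c
variable {α : Type} [Inhabited α] {QB : Type} {d : ℕ}

/-- state after reading a finite word -/
def stA (B : DPA QB α d) (q : QB) (v : List α) : QB := v.foldl B.next q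

theorem stA_append (B : DPA QB α d) (q : QB) (u v : List α) :
    stA B q (u ++ v) = stA B (stA B q u) v := by simp [stA]

theorem stA_singleton (B : DPA QB α d) (q : QB) (a : α) : stA B q [a] = B.next q a := rfl

theorem wordPrefix_succ (w : ℕ → α) (n : ℕ) :
    wordPrefix w (n + 1) = wordPrefix w n ++ [w n] := by
  simp only [wordPrefix, List.ofFn_succ', List.concat_eq_append, Fin.val_last]
  congr

theorem wordPrefix_congr {w w' : ℕ → α} {n : ℕ} (h : ∀ i < n, w i = w' i) :
    wordPrefix w n = wordPrefix w' n := by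
  simp only [wordPrefix]
  congr 1
  funext i
  exact h i i.isLt

theorem wordPrefix_add (w : ℕ → α) (m n : ℕ) :
    wordPrefix w (m + n) = wordPrefix w m ++ wordPrefix (wordDrop w m) n := by
  induction n with
  | zero => simp [wordPrefix]
  | succ n ih =>
    rw [← Nat.add_assoc, wordPrefix_succ, ih, wordPrefix_succ, List.append_assoc]
    rfl

theorem run_eq_stA (B : DPA QB α d) (w : ℕ → α) (n : ℕ) :
    B.run w n = stA B B.init (wordPrefix w n) := by
  induction n with
  | zero => rfl
  | succ n ih =>
    rw [wordPrefix_succ, stA_append, ← ih]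
    rfl

theorem prependW_left (g : List α) (x : ℕ → α) (i : ℕ) (h : i < g.length) :
    prependW g x i = g[i] := by
  simp [prependW, h]

theorem prependW_right (g : List α) (x : ℕ → α) (i : ℕ) :
    prependW g x (g.length + i) = x i := by
  have h : ¬ (g.length + i < g.length) := by omega
  simp only [prependW, dif_neg h]
  congr 1
  omega

theorem prepend_prefix (g : List α) (x : ℕ → α) (n : ℕ) :
    wordPrefix (prependW g x) (g.length + n) = g ++ wordPrefix x n := by
  induction n with
  | zero =>
    rw [Nat.add_zero]
    apply List.ext_getElem
    · simp [wordPrefix]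
    · intro i h1 h2
      have h3 : i < g.length := by simpa [wordPrefix] using h1
      simp only [wordPrefix, List.getElem_ofFn, List.ofFn_zero, List.append_nil]
      exact prependW_left g x i h3
  | succ n ih =>
    rw [← Nat.add_assoc, wordPrefix_succ, ih, wordPrefix_succ, ← List.append_assoc]
    congr 2
    exact prependW_right g x n

end S17c
section S17d
variable {α : Type} [Inhabited α] {QB : Type} {d : ℕ}

/-- `v` repeated `k` times -/
def repW (k : ℕ) (v : List α) : List α :=
  match k with
  | 0 => []
  | k + 1 => repW k v ++ v

theorem repW_length (k : ℕ) (v : List α) : (repW k v).length = k * v.length := by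
  induction k with
  | zero => simp [repW]
  | succ k ih => simp [repW, ih, Nat.succ_mul]

theorem repW_add (a b : ℕ) (v : List α) : repW (a + b) v = repW a v ++ repW b v := by
  induction b with
  | zero => simp [repW]
  | succ b ih => rw [← Nat.add_assoc]; simp [repW, ih, List.append_assoc]

theorem perWord_add_mod (v : List α) (i : ℕ) : perWord v (i + v.length) = perWord v i := by
  simp [perWord, Nat.add_mod_right]

theorem perWord_add_mul (v : List α) (i k : ℕ) : perWord v (i + k * v.length) = perWord v i := by
  simp [perWord, Nat.add_mul_mod_self_right]

theorem perWord_lt (v : List α) (i : ℕ) (h : i < v.length) : perWord v i = v[i] := by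
  have h2 : i % v.length = i := Nat.mod_eq_of_lt h
  simp only [perWord, h2]
  exact List.getD_eq_getElem v default h

theorem repW_getD (v : List α) (hv : v ≠ []) :
    ∀ (k i : ℕ), i < k * v.length → (repW k v).getD i default = perWord v i := by
  intro k
  induction k with
  | zero => intro i h; omega
  | succ k ih =>
    intro i h
    by_cases h1 : i < k * v.length
    · rw [repW, List.getD_append _ _ _ _ (by rw [repW_length]; exact h1)]
      exact ih i h1
    · have hvl : 0 < v.length := List.length_pos_iff.mpr hv
      have hi : i < k * v.length + v.length := by
        have h' := h; rw [Nat.succ_mul] at h'; exact h'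
      have h2 : i - k * v.length < v.length := by omega
      have h3 : perWord v i = v[i - k * v.length] := by
        calc perWord v i = perWord v ((i - k * v.length) + k * v.length) := by
              congr 1; omega
          _ = perWord v (i - k * v.length) := perWord_add_mul v _ k
          _ = v[i - k * v.length] := perWord_lt v _ h2
      rw [repW, List.getD_eq_getElem _ _ (by simpa [repW_length] using hi),
        List.getElem_append_right (by rw [repW_length]; omega), h3]
      simp [repW_length]

theorem wordPrefix_perWord (v : List α) (hv : v ≠ []) (k : ℕ) :
    wordPrefix (perWord v) (k * v.length) = repW k v := by
  apply List.ext_getElem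
  · simp [wordPrefix, repW_length]
  · intro i h1 h2
    simp only [wordPrefix, List.getElem_ofFn]
    rw [← List.getD_eq_getElem _ default h2, repW_getD v hv k i (by rwa [repW_length] at h2)]

theorem run_prependW (B : DPA QB α d) (g : List α) (x : ℕ → α) (n : ℕ) :
    B.run (prependW g x) (g.length + n) = stA B (stA B B.init g) (wordPrefix x n) := by
  rw [run_eq_stA, prepend_prefix, stA_append]

/-- key facts about `minInfOften` for eventually periodic sequences -/
theorem minIO_facts (pi : ℕ → ℕ) (N P : ℕ) (hP : 0 < P)
    (hper : ∀ n, pi (N + n + P) = pi (N + n)) :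
    (∃ n < P, pi (N + n) = minInfOften pi) ∧ (∀ n, minInfOften pi ≤ pi (N + n)) := by
  have hmul : ∀ (k n : ℕ), pi (N + n + k * P) = pi (N + n) := by
    intro k
    induction k with
    | zero => simp
    | succ k ih =>
      intro n
      have h1 : N + n + (k + 1) * P = N + (n + k * P) + P := by ring
      rw [h1, hper (n + k * P), ← Nat.add_assoc, ih]
  have hmem : ∀ n, pi (N + n) ∈ {x : ℕ | ∀ N' : ℕ, ∃ m : ℕ, N' ≤ m ∧ pi m = x} := by
    intro n N'
    refine ⟨N + n + N' * P, by nlinarith, hmul N' n⟩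
  have hne : {x : ℕ | ∀ N' : ℕ, ∃ m : ℕ, N' ≤ m ∧ pi m = x}.Nonempty := ⟨_, hmem 0⟩
  constructor
  · have hsp := Nat.sInf_mem hne
    obtain ⟨m, hm1, hm2⟩ := hsp N
    set j := m - N with hj
    have hmj : m = N + j := by omega
    refine ⟨j % P, Nat.mod_lt _ hP, ?_⟩
    have h4 : pi (N + j % P) = pi (N + j) := by
      conv_rhs => rw [show j = j % P + (j / P) * P by rw [Nat.mod_add_div']]
      rw [← Nat.add_assoc, hmul]
    rw [minInfOften, h4, ← hmj, hm2]
  · intro n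
    exact Nat.sInf_le (hmem n)

end S17d
section S17e
variable {α : Type} [Inhabited α] {QB : Type} {d : ℕ}

theorem perWord_shift_mul (v : List α) (e : ℕ) :
    wordDrop (perWord v) (e * v.length) = perWord v := by
  funext i
  simp only [wordDrop]
  rw [Nat.add_comm, perWord_add_mul]

/-- The pinning lemma: a loop on a pure power, reached by a prefix whose language
membership is known, has its minimal loop priority of the corresponding parity. -/
theorem pin_lemma (L : Set (ℕ → α)) (B : DPA QB α d) (hB : ∀ w : ℕ → α, w ∈ L ↔ B.Accepts w)
    (g Ψ : List α) (hΨ : Ψ ≠ []) (e : ℕ) (he : 1 ≤ e)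
    (hloop : stA B (stA B B.init g) (repW e Ψ) = stA B B.init g) (C : ℕ)
    (hmem : prependW g (perWord Ψ) ∈ L ↔ Even C) :
    (Even (minInfOften (fun i => B.prio (B.run (prependW g (perWord Ψ)) i)
        (prependW g (perWord Ψ) i))) ↔ Even C) ∧
    (∃ n < e * Ψ.length,
      B.prio (B.run (prependW g (perWord Ψ)) (g.length + n)) (prependW g (perWord Ψ) (g.length + n))
        = minInfOften (fun i => B.prio (B.run (prependW g (perWord Ψ)) i)
            (prependW g (perWord Ψ) i))) ∧
    (∀ n, minInfOften (fun i => B.prio (B.run (prependW g (perWord Ψ)) i)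
        (prependW g (perWord Ψ) i)) ≤
      B.prio (B.run (prependW g (perWord Ψ)) (g.length + n)) (prependW g (perWord Ψ) (g.length + n))) := by
  set w := prependW g (perWord Ψ) with hw
  set pi := fun i => B.prio (B.run w i) (w i) with hpi
  set P := e * Ψ.length with hP
  have hPpos : 0 < P := by
    have : 0 < Ψ.length := List.length_pos_iff.mpr hΨ
    positivity
  have hletter : ∀ m, w (g.length + m) = perWord Ψ m := fun m => prependW_right g _ m
  have hstate : ∀ m, B.run w (g.length + m) = stA B (stA B B.init g) (wordPrefix (perWord Ψ) m) :=
    fun m => run_prependW B g _ m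
  have hper : ∀ n, pi (g.length + n + P) = pi (g.length + n) := by
    intro n
    have h1 : g.length + n + P = g.length + (P + n) := by omega
    have hst : B.run w (g.length + (P + n)) = B.run w (g.length + n) := by
      rw [hstate, hstate, wordPrefix_add, wordPrefix_perWord Ψ hΨ e, stA_append, hloop,
        perWord_shift_mul]
    have hlet : w (g.length + (P + n)) = w (g.length + n) := by
      rw [hletter, hletter, Nat.add_comm P n, perWord_add_mul]
    rw [h1, hpi]
    simp only
    rw [hst, hlet]
  obtain ⟨hmem', hle⟩ := minIO_facts pi g.length P hPpos hper
  refine ⟨?_, hmem', hle⟩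
  have hacc : w ∈ L ↔ Even (minInfOften pi) := by
    rw [hB w]
    exact Iff.rfl
  rw [← hacc, hmem]
end S17e
section S17f
variable {α : Type} [Inhabited α] (L : Set (ℕ → α))

theorem repW_one (v : List α) : repW 1 v = v := by simp [repW]

theorem wit_lemma {n : ℕ} (Vm : List (List α)) (hVm : Vm ≠ []) (lam : List α)
    (h : ¬ (congrData L (n+1)).bot (lam :: Vm)) :
    ∃ z, z ≠ [] ∧ (congrData L n).eq (tcat Vm (lam ++ z)) Vm ∧
      (prependW Vm.reverse.flatten (perWord (lam ++ z)) ∈ L ↔ Even (n+2)) := by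
  rw [botS] at h
  push_neg at h
  obtain ⟨_, w, hw, heq, hmem⟩ := h
  rw [tmerge_cons _ _ hVm, tcat_tcat] at heq
  refine ⟨w, hw, heq, ?_⟩
  have hpar : Even (n + 2) ↔ ¬ Even (n + 1) := Nat.even_add_one
  tauto

theorem eq_tcat_rep₁ {n : ℕ} {Y : List (List α)} {Ψ : List α}
    (h : (congrData L n).eq (tcat Y Ψ) Y) :
    ∀ (X : List (List α)), (congrData L n).eq X Y → ∀ j : ℕ,
      (congrData L n).eq (tcat X (repW j Ψ)) Y := by
  intro X hX j
  induction j with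
  | zero => rw [show repW 0 Ψ = [] from rfl, tcat_nil]; exact hX
  | succ j ih =>
    rw [show repW (j+1) Ψ = repW j Ψ ++ Ψ from rfl, ← tcat_tcat]
    exact eq_trans L (eq_tcat L Ψ ih) h

theorem eq_tcat_rep₂ {n : ℕ} {Y : List (List α)} {Ψ : List α}
    (h : (congrData L n).eq (tcat Y Ψ) Y) :
    ∀ j : ℕ, 1 ≤ j → (congrData L n).eq (tcat Y (repW j Ψ)) Y := by
  intro j hj
  induction j, hj using Nat.le_induction with
  | base => rw [repW_one]; exact h
  | succ j hj ih =>
    rw [show repW (j+1) Ψ = repW j Ψ ++ Ψ from rfl, ← tcat_tcat]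
    exact eq_trans L (eq_tcat L Ψ ih) h

theorem repW_split (Ψ' : List α) (K j₁ : ℕ) (hj : j₁ ≤ K) :
    repW K Ψ' = repW j₁ Ψ' ++ repW (K - j₁) Ψ' := by
  rw [← repW_add]
  congr 1
  omega

theorem perWord_nested (a z Ψ' : List α) (hΨ' : Ψ' ≠ []) (K j₁ : ℕ) (hj : j₁ ≤ K) :
    ∀ i, i < (K - j₁) * Ψ'.length →
      perWord (a ++ (repW K Ψ' ++ z)) ((a ++ repW j₁ Ψ').length + i) = perWord Ψ' i := by
  intro i hi
  have hsplit : a ++ (repW K Ψ' ++ z) = (a ++ repW j₁ Ψ') ++ (repW (K - j₁) Ψ' ++ z) := by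
    rw [repW_split Ψ' K j₁ hj]
    simp [List.append_assoc]
  rw [hsplit]
  set v := a ++ repW j₁ Ψ' with hv
  have hlen : i < (repW (K - j₁) Ψ').length := by rwa [repW_length]
  have hpos : v.length + i < (v ++ (repW (K - j₁) Ψ' ++ z)).length := by
    simp only [List.length_append]
    omega
  rw [perWord_lt _ _ hpos, List.getElem_append_right (by omega)]
  have h2 : v.length + i - v.length = i := by omega
  rw [List.getElem_append_left (by omega : v.length + i - v.length < (repW (K - j₁) Ψ').length)]
  rw [← List.getD_eq_getElem _ default, repW_getD Ψ' hΨ' _ _ (by rw [h2]; rwa [repW_length] at hlen), h2]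

theorem wordPrefix_nested (a z Ψ' : List α) (hΨ' : Ψ' ≠ []) (K j₁ : ℕ) (hj : j₁ ≤ K)
    (n' : ℕ) (hn' : n' ≤ (K - j₁) * Ψ'.length) :
    wordPrefix (perWord (a ++ (repW K Ψ' ++ z))) ((a ++ repW j₁ Ψ').length + n') =
      (a ++ repW j₁ Ψ') ++ wordPrefix (perWord Ψ') n' := by
  set Ψ := a ++ (repW K Ψ' ++ z) with hΨdef
  set v := a ++ repW j₁ Ψ' with hv
  have hsplit : Ψ = v ++ (repW (K - j₁) Ψ' ++ z) := by
    rw [hΨdef, hv, repW_split Ψ' K j₁ hj]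
    simp [List.append_assoc]
  have hvlen : v.length ≤ Ψ.length := by rw [hsplit]; simp
  rw [wordPrefix_add]
  congr 1
  · apply List.ext_getElem
    · simp [wordPrefix]
    · intro i h1 h2
      simp only [wordPrefix, List.getElem_ofFn]
      rw [perWord_lt _ _ (by omega), List.getElem_of_eq hsplit, List.getElem_append_left h2]
  · apply wordPrefix_congr
    intro i hie
    show perWord Ψ (v.length + i) = perWord Ψ' i
    exact perWord_nested a z Ψ' hΨ' K j₁ hj i (by omega)

theorem even_succ_iff_ne {x y m : ℕ} (hx : Even x ↔ Even (m+1)) (hy : Even y ↔ Even (m+2)) :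
    x ≠ y := by
  intro h
  subst h
  have : Even (m + 2) ↔ ¬ Even (m + 1) := Nat.even_add_one
  tauto

end S17f
section S17g
variable {α : Type} [Inhabited α] {QB : Type} {d : ℕ}

/-- `Ψ` is a good loop word at level `m` over the rest-tuple `V`. -/
def GoodW (L : Set (ℕ → α)) (V : List (List α)) (m : ℕ) (Ψ : List α) : Prop :=
  Ψ ≠ [] ∧ (congrData L (m-1)).eq (tcat V Ψ) V ∧
    (prependW V.reverse.flatten (perWord Ψ) ∈ L ↔ Even (m+1))

theorem wit_good (L : Set (ℕ → α)) {n : ℕ} (Vm : List (List α)) (hVm : Vm ≠ [])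
    (lam : List α) (hb : ¬ (congrData L (n+1)).bot (lam :: Vm)) :
    ∃ z, z ≠ [] ∧ GoodW L Vm (n+1) (lam ++ z) := by
  obtain ⟨z, hz, heq, hmem⟩ := wit_lemma L Vm hVm lam hb
  exact ⟨z, hz, fun h => hz (List.append_eq_nil_iff.mp h).2, heq, hmem⟩

theorem step_good (L : Set (ℕ → α)) {n : ℕ} (Vm Vm1 : List (List α)) (hVm : Vm ≠ [])
    (b : List α) (hcons : Vm1 = b :: Vm)
    (hnbV : ¬ (congrData L (n+1)).bot Vm1) (K : ℕ) (hK : 1 ≤ K)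
    (Ψ' : List α) (hG' : GoodW L Vm1 (n+2) Ψ') :
    ∃ z, z ≠ [] ∧ GoodW L Vm (n+1) (b ++ (repW K Ψ' ++ z)) := by
  have heqK := eq_tcat_rep₂ L hG'.2.1 K hK
  have hx : tcat Vm1 (repW K Ψ') = (b ++ repW K Ψ') :: Vm := by rw [hcons]; rfl
  rw [hx] at heqK
  have hnb2 : ¬ (congrData L (n+1)).bot ((b ++ repW K Ψ') :: Vm) := fun hbb =>
    hnbV ((eq_bot_congr L heqK).1 hbb)
  obtain ⟨z, hz, hG⟩ := wit_good L Vm hVm (b ++ repW K Ψ') hnb2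
  rw [List.append_assoc] at hG
  exact ⟨z, hz, hG⟩

/-- one descent step of the main run analysis -/
theorem inv_step (L : Set (ℕ → α)) [Fintype QB] (B : DPA QB α d)
    (hB : ∀ w : ℕ → α, w ∈ L ↔ B.Accepts w)
    {n' : ℕ} (Vm Vm1 : List (List α)) (b z Ψ' : List α) (K : ℕ)
    (hKcard : Fintype.card QB < K)
    (hcons : Vm1 = b :: Vm)
    (hG' : GoodW L Vm1 (n'+2) Ψ')
    (hGm : GoodW L Vm (n'+1) (b ++ (repW K Ψ' ++ z)))
    (S : List (List α)) (e r : ℕ)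
    (hS : (congrData L n').eq S Vm)
    (he : 1 ≤ e)
    (hloop : stA B (stA B B.init S.reverse.flatten) (repW e (b ++ (repW K Ψ' ++ z))) =
      stA B B.init S.reverse.flatten)
    (hr : r = minInfOften (fun i =>
      B.prio (B.run (prependW S.reverse.flatten (perWord (b ++ (repW K Ψ' ++ z)))) i)
        (prependW S.reverse.flatten (perWord (b ++ (repW K Ψ' ++ z))) i)))
    (hrpar : Even r ↔ Even (n'+2)) (hrlb : n' + 2 ≤ r) :
    ∃ (S' : List (List α)) (e' r' : ℕ),
      (congrData L (n'+1)).eq S' Vm1 ∧ 1 ≤ e' ∧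
      stA B (stA B B.init S'.reverse.flatten) (repW e' Ψ') = stA B B.init S'.reverse.flatten ∧
      r' = minInfOften (fun i =>
        B.prio (B.run (prependW S'.reverse.flatten (perWord Ψ')) i)
          (prependW S'.reverse.flatten (perWord Ψ') i)) ∧
      (Even r' ↔ Even (n'+3)) ∧ n' + 3 ≤ r' := by
  set Ψ : List α := b ++ (repW K Ψ' ++ z) with hΨdef
  set g : List α := S.reverse.flatten with hgdef
  set τ : QB := stA B B.init g with hτdef
  have hΨ'ne : Ψ' ≠ [] := hG'.1
  have hΨ'len : 0 < Ψ'.length := List.length_pos_iff.mpr hΨ'ne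
  -- outer pin: lower bound on all priorities in the loop region
  have hmemo : prependW g (perWord Ψ) ∈ L ↔ Even (n'+2) := by
    rw [eq_flatten L hS (perWord Ψ)]
    exact hGm.2.2
  obtain ⟨hparo, -, hle⟩ := pin_lemma L B hB g Ψ hGm.1 e he hloop (n'+2) hmemo
  -- pigeonhole for the inner pumping
  have hρ : ∀ j : Fin K, True := fun _ => trivial
  set ρ : QB := stA B τ b with hρdef
  obtain ⟨x, y, hxy, hfxy⟩ := Fintype.exists_ne_map_eq_of_card_lt
    (fun j : Fin K => stA B ρ (repW (j : ℕ) Ψ')) (by simpa using hKcard)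
  -- extract j₁ < j₂
  obtain ⟨j₁, j₂, hj12, hj2K, hfeq⟩ :
      ∃ j₁ j₂ : ℕ, j₁ < j₂ ∧ j₂ < K ∧ stA B ρ (repW j₁ Ψ') = stA B ρ (repW j₂ Ψ') := by
    rcases lt_or_gt_of_ne hxy with h | h
    · exact ⟨x, y, h, y.isLt, by rw [hfxy]⟩
    · exact ⟨y, x, h, x.isLt, by rw [hfxy]⟩
  set e' : ℕ := j₂ - j₁ with he'def
  have he' : 1 ≤ e' := by omega
  set v : List α := b ++ repW j₁ Ψ' with hvdef
  set τ' : QB := stA B ρ (repW j₁ Ψ') with hτ'def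
  have hτ'v : stA B τ v = τ' := by rw [hvdef, stA_append]
  have hloop' : stA B τ' (repW e' Ψ') = τ' := by
    have h1 : repW j₂ Ψ' = repW j₁ Ψ' ++ repW e' Ψ' := by
      rw [← repW_add]; congr 1; omega
    rw [hτ'def, ← stA_append, ← h1, ← hfeq]
  -- the new tuple
  set S' : List (List α) := v :: S with hS'def
  have hg' : S'.reverse.flatten = g ++ v := by rw [hS'def, flatten_cons, hgdef]
  have hS' : (congrData L (n'+1)).eq S' Vm1 := by
    have h1 : (congrData L (n'+1)).eq (v :: S) (v :: Vm) := eq_newcomp L hS v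
    rcases Nat.eq_zero_or_pos j₁ with hj0 | hj0
    · have hveq : v = b := by rw [hvdef, hj0]; simp [repW]
      rw [hS'def, hveq, hcons]
      rw [hveq] at h1
      exact h1
    · have h2 : (congrData L (n'+1)).eq (v :: Vm) Vm1 := by
        have h3 := eq_tcat_rep₂ L hG'.2.1 j₁ hj0
        have h4 : tcat Vm1 (repW j₁ Ψ') = v :: Vm := by rw [hcons, hvdef]; rfl
        rwa [h4] at h3
      exact eq_trans L h1 h2
  -- inner pin
  have hτ'' : stA B B.init S'.reverse.flatten = τ' := by
    rw [hg', stA_append, ← hτdef, hτ'v]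
  have hloop'' : stA B (stA B B.init S'.reverse.flatten) (repW e' Ψ') =
      stA B B.init S'.reverse.flatten := by rw [hτ'']; exact hloop'
  have hmemi : prependW S'.reverse.flatten (perWord Ψ') ∈ L ↔ Even (n'+3) := by
    rw [eq_flatten L hS' (perWord Ψ')]
    exact hG'.2.2
  obtain ⟨hpari, hreal, -⟩ :=
    pin_lemma L B hB S'.reverse.flatten Ψ' hΨ'ne e' he' hloop'' (n'+3) hmemi
  set r' : ℕ := minInfOften (fun i =>
    B.prio (B.run (prependW S'.reverse.flatten (perWord Ψ')) i)
      (prependW S'.reverse.flatten (perWord Ψ') i)) with hr'def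
  refine ⟨S', e', r', hS', he', hloop'', rfl, hpari, ?_⟩
  -- lower bound: match an occurrence of r' inside the outer loop region
  obtain ⟨n1, hn1, hn1val⟩ := hreal
  have hj1K : j₁ ≤ K := by omega
  have he'K : e' ≤ K - j₁ := by omega
  have hn1b : n1 < (K - j₁) * Ψ'.length := lt_of_lt_of_le hn1 (Nat.mul_le_mul_right _ he'K)
  set pos : ℕ := v.length + n1 with hposdef
  -- letters match
  have hlet : prependW g (perWord Ψ) (g.length + pos) = perWord Ψ' n1 := by
    rw [prependW_right]
    exact perWord_nested b z Ψ' hΨ'ne K j₁ hj1K n1 hn1b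
  -- states match
  have hstates : B.run (prependW g (perWord Ψ)) (g.length + pos) =
      B.run (prependW S'.reverse.flatten (perWord Ψ')) (S'.reverse.flatten.length + n1) := by
    rw [run_prependW, run_prependW, hposdef]
    rw [show wordPrefix (perWord Ψ) (v.length + n1) = v ++ wordPrefix (perWord Ψ') n1 from
      wordPrefix_nested b z Ψ' hΨ'ne K j₁ hj1K n1 (le_of_lt hn1b)]
    rw [stA_append, ← hτdef, hτ'v, hτ'']
  have hlet' : prependW S'.reverse.flatten (perWord Ψ') (S'.reverse.flatten.length + n1) =
      perWord Ψ' n1 := prependW_right _ _ _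
  have hmatch : B.prio (B.run (prependW g (perWord Ψ)) (g.length + pos))
      (prependW g (perWord Ψ) (g.length + pos)) = r' := by
    rw [hstates, hlet, ← hlet']
    exact hn1val
  have hler' : r ≤ r' := by
    have := hle pos
    rw [hmatch] at this
    rwa [← hr] at this
  have hne : r ≠ r' := even_succ_iff_ne hrpar hpari
  omega
end S17g
section S17h
variable {α : Type} [Inhabited α] {QB : Type} {d : ℕ}

/-- base of the main run analysis (level 1) -/
theorem inv_base (L : Set (ℕ → α)) [Fintype QB] (B : DPA QB α d)
    (hB : ∀ w : ℕ → α, w ∈ L ↔ B.Accepts w)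
    (V1 : List (List α)) (x : List α) (hV1 : V1 = [x])
    (Ψ : List α) (hG : GoodW L V1 1 Ψ) :
    ∃ (S : List (List α)) (e r : ℕ),
      (congrData L 0).eq S V1 ∧ 1 ≤ e ∧
      stA B (stA B B.init S.reverse.flatten) (repW e Ψ) = stA B B.init S.reverse.flatten ∧
      r = minInfOften (fun i =>
        B.prio (B.run (prependW S.reverse.flatten (perWord Ψ)) i)
          (prependW S.reverse.flatten (perWord Ψ) i)) ∧
      (Even r ↔ Even 2) ∧ 2 ≤ r := by
  have hrefl : (congrData L 0).eq V1 V1 := by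
    rw [hV1]
    rw [eq0]
    exact fun w => Iff.rfl
  set τ : QB := stA B B.init V1.reverse.flatten with hτ
  obtain ⟨xx, yy, hxy, hfxy⟩ := Fintype.exists_ne_map_eq_of_card_lt
    (fun j : Fin (Fintype.card QB + 1) => stA B τ (repW (j : ℕ) Ψ)) (by simp)
  obtain ⟨j₁, j₂, hj12, hfeq⟩ :
      ∃ j₁ j₂ : ℕ, j₁ < j₂ ∧ stA B τ (repW j₁ Ψ) = stA B τ (repW j₂ Ψ) := by
    rcases lt_or_gt_of_ne hxy with h | h
    · exact ⟨xx, yy, h, by rw [hfxy]⟩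
    · exact ⟨yy, xx, h, by rw [hfxy]⟩
  set S : List (List α) := tcat V1 (repW j₁ Ψ) with hSdef
  have hS : (congrData L 0).eq S V1 := eq_tcat_rep₁ L hG.2.1 V1 hrefl j₁
  have hV1ne : V1 ≠ [] := by rw [hV1]; simp
  have hgS : S.reverse.flatten = V1.reverse.flatten ++ repW j₁ Ψ := flatten_tcat V1 _ hV1ne
  have hτS : stA B B.init S.reverse.flatten = stA B τ (repW j₁ Ψ) := by
    rw [hgS, stA_append, hτ]
  set e : ℕ := j₂ - j₁ with hedef
  have he : 1 ≤ e := by omega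
  have hloop : stA B (stA B B.init S.reverse.flatten) (repW e Ψ) =
      stA B B.init S.reverse.flatten := by
    rw [hτS, ← stA_append, ← repW_add, show j₁ + e = j₂ by omega, ← hfeq]
  have hmem : prependW S.reverse.flatten (perWord Ψ) ∈ L ↔ Even 2 := by
    rw [eq_flatten L hS (perWord Ψ)]
    exact hG.2.2
  obtain ⟨hpar, hreal, -⟩ := pin_lemma L B hB S.reverse.flatten Ψ hG.1 e he hloop 2 hmem
  refine ⟨S, e, _, hS, he, hloop, rfl, hpar, ?_⟩
  obtain ⟨n1, hn1, hval⟩ := hreal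
  have h1 : 1 ≤ minInfOften (fun i =>
      B.prio (B.run (prependW S.reverse.flatten (perWord Ψ)) i)
        (prependW S.reverse.flatten (perWord Ψ) i)) := by
    rw [← hval]
    exact B.prio_pos _ _
  have h2 : Even (minInfOften (fun i =>
      B.prio (B.run (prependW S.reverse.flatten (perWord Ψ)) i)
        (prependW S.reverse.flatten (perWord Ψ) i))) := hpar.mpr ⟨1, rfl⟩
  obtain ⟨c, hc⟩ := h2
  omega
end S17h
set_option maxHeartbeats 1000000 in
/-- If `L` is recognised by a deterministic parity automaton with
priorities in `[1,d]`, then every tuple of length `d+1` (and hence every longer tuple)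
satisfies `ū ≈ ⊥`. -/
theorem statement_17 {α : Type} [Fintype α] [Inhabited α]
    (L : Set (ℕ → α)) {QB : Type} [Fintype QB] {d : ℕ}
    (B : DPA QB α d) (hB : ∀ w : ℕ → α, w ∈ L ↔ B.Accepts w) :
    ∀ t : List (List α), d + 1 ≤ t.length → TupBot L t := by
  intro t ht
  by_contra hbot
  have hd1 : 1 ≤ d := by
    rcases Nat.eq_zero_or_pos d with hd | hd
    · have h1 := B.prio_pos B.init (Classical.arbitrary α)
      have h2 := B.prio_le B.init (Classical.arbitrary α)
      omega
    · exact hd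
  set N := t.length with hN
  have hNd : d + 1 ≤ N := ht
  set M : ℕ → List (List α) := fun k => tmerge^[N - k] t with hM
  have hMN : M N = t := by rw [hM]; simp
  have hlen_tmerge : ∀ s : List (List α), 2 ≤ s.length → (tmerge s).length + 1 = s.length := by
    intro s hs
    rcases s with _ | ⟨a, _ | ⟨b, r⟩⟩ <;> simp_all [tmerge]
  have hMsucc : ∀ k, k < N → M k = tmerge (M (k+1)) := by
    intro k hk
    have h1 : N - k = (N - (k+1)) + 1 := by omega
    rw [hM]
    simp only
    rw [h1, Function.iterate_succ_apply']
  have hIterLen : ∀ j, j ≤ N - 1 → (tmerge^[j] t).length = N - j := by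
    intro j
    induction j with
    | zero => intro _; simp [hN]
    | succ j ih =>
      intro hj
      rw [Function.iterate_succ_apply']
      have hlj := ih (by omega)
      have h2 : 2 ≤ (tmerge^[j] t).length := by omega
      have h3 := hlen_tmerge _ h2
      omega
  have hMlen : ∀ k, 1 ≤ k → k ≤ N → (M k).length = k := by
    intro k h1 h2
    rw [hM]
    simp only
    have h3 := hIterLen (N - k) (by omega)
    rw [h3]
    omega
  -- the chain of non-⊥ merges
  have aux2 : ∀ j, j ≤ N - 1 → ¬ (congrData L (N - j - 1)).bot (M (N - j)) := by
    intro j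
    induction j with
    | zero =>
      intro _
      rw [Nat.sub_zero, hMN]
      simpa [TupBot, ← hN] using hbot
    | succ j ih =>
      intro hj hb
      apply ih (by omega)
      obtain ⟨n2, hn2⟩ : ∃ n2, N - (j+1) = n2 + 1 := ⟨N - (j+1) - 1, by omega⟩
      have hNj : N - j = n2 + 2 := by omega
      have hlev : N - j - 1 = n2 + 1 := by omega
      rw [hlev, hNj]
      have hlenk : (M (n2+2)).length = n2 + 2 := hMlen _ (by omega) (by omega)
      obtain ⟨u', ubar, hcons⟩ : ∃ u' ubar, M (n2+2) = u' :: ubar := by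
        rcases hMk : M (n2+2) with _ | ⟨a, b⟩
        · rw [hMk] at hlenk; simp at hlenk
        · exact ⟨a, b, rfl⟩
      rw [hcons, botS]
      left
      rw [← hcons, ← hMsucc (n2+1) (by omega)]
      have h5 : N - (j+1) - 1 = n2 := by omega
      rw [h5, hn2] at hb
      exact hb
  have hnbM : ∀ m, 1 ≤ m → m + 1 ≤ N → ¬ (congrData L m).bot (M (m+1)) := by
    intro m h1 h2
    have h3 := aux2 (N - (m+1)) (by omega)
    have e1 : N - (N - (m+1)) = m + 1 := by omega
    rw [e1] at h3
    exact h3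
  -- heads and tails
  set A : ℕ → List α := fun m => (M (m+1)).head! with hA
  set V : ℕ → List (List α) := fun m => (M (m+1)).tail with hV
  have hMcons : ∀ m, 1 ≤ m → m + 1 ≤ N → M (m+1) = A m :: V m := by
    intro m h1 h2
    have hne : M (m+1) ≠ [] := by
      intro h
      have h3 := hMlen (m+1) (by omega) h2
      rw [h] at h3
      simp at h3
    exact (List.cons_head!_tail hne).symm
  have hVlen : ∀ m, 1 ≤ m → m + 1 ≤ N → (V m).length = m := by
    intro m h1 h2
    have h3 := hMlen (m+1) (by omega) h2
    rw [hMcons m h1 h2] at h3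
    simpa using h3
  have hVne : ∀ m, 1 ≤ m → m + 1 ≤ N → V m ≠ [] := by
    intro m h1 h2 h
    have h3 := hVlen m h1 h2
    rw [h] at h3
    simp at h3
    omega
  have hVcons : ∀ m, 1 ≤ m → m + 2 ≤ N → ∃ bb, V (m+1) = bb :: V m := by
    intro m h1 h2
    obtain ⟨bb, W, hbW⟩ := List.exists_cons_of_ne_nil (hVne (m+1) (by omega) h2)
    refine ⟨bb, ?_⟩
    have h3 : M (m+1) = tmerge (M (m+2)) := hMsucc (m+1) (by omega)
    have h4 : M (m+2) = A (m+1) :: V (m+1) := hMcons (m+1) (by omega) h2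
    rw [h4, hbW] at h3
    have h5 : M (m+1) = (bb ++ A (m+1)) :: W := h3
    have h6 : M (m+1) = A m :: V m := hMcons m h1 (by omega)
    rw [h6] at h5
    injection h5 with _ h7
    rw [hbW, h7]
  have hnbV : ∀ m, 1 ≤ m → m + 2 ≤ N → ¬ (congrData L m).bot (V (m+1)) := by
    intro m h1 h2 hbb
    apply hnbM m h1 (by omega)
    have h3 : M (m+1) = tcat (V (m+1)) (A (m+1)) := by
      rw [hMsucc (m+1) (by omega), hMcons (m+1) (by omega) h2,
        tmerge_cons _ _ (hVne (m+1) (by omega) h2)]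
    rw [h3]
    exact bot_tcat L _ hbb
  set K : ℕ := Fintype.card QB + 1 with hK
  -- existence of a good word at the top level d
  have hGd : ∃ Ψ, GoodW L (V d) d Ψ := by
    have hb : ¬ (congrData L d).bot (A d :: V d) := by
      rw [← hMcons d hd1 (by omega)]
      exact hnbM d hd1 (by omega)
    obtain ⟨n2, hn2⟩ : ∃ n2, d = n2 + 1 := ⟨d - 1, by omega⟩
    rw [hn2] at hb ⊢
    obtain ⟨z, hz, hG⟩ := wit_good L (V (n2+1)) (hVne (n2+1) (by omega) (by omega)) _ hb
    exact ⟨_, hG⟩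
  -- descent step for good words
  have hGstep : ∀ m, 1 ≤ m → m < d → ∀ Ψ', GoodW L (V (m+1)) (m+1) Ψ' →
      ∃ b z, z ≠ [] ∧ V (m+1) = b :: V m ∧ GoodW L (V m) m (b ++ (repW K Ψ' ++ z)) := by
    intro m h1 h2 Ψ' hG'
    obtain ⟨bb, hbb⟩ := hVcons m h1 (by omega)
    obtain ⟨n2, hn2⟩ : ∃ n2, m = n2 + 1 := ⟨m - 1, by omega⟩
    rw [hn2] at hbb hG' ⊢
    obtain ⟨z, hz, hG⟩ := step_good L (V (n2+1)) (V (n2+2)) (hVne (n2+1) (by omega) (by omega))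
      bb hbb (hnbV (n2+1) (by omega) (by omega)) K (by omega) Ψ' hG'
    exact ⟨bb, z, hz, hbb, hG⟩
  -- build the tower of good words
  have hGEX : ∃ Ψs : ℕ → List α, (∀ m, 1 ≤ m → m ≤ d → GoodW L (V m) m (Ψs m)) ∧
      (∀ m, 1 ≤ m → m < d → ∃ b z, V (m+1) = b :: V m ∧
        Ψs m = b ++ (repW K (Ψs (m+1)) ++ z)) := by
    have haux : ∀ i, i ≤ d - 1 → ∃ Ψs : ℕ → List α,
        (∀ m, d - i ≤ m → m ≤ d → GoodW L (V m) m (Ψs m)) ∧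
        (∀ m, d - i ≤ m → m < d → ∃ b z, V (m+1) = b :: V m ∧
          Ψs m = b ++ (repW K (Ψs (m+1)) ++ z)) := by
      intro i
      induction i with
      | zero =>
        intro _
        obtain ⟨Ψd, hΨd⟩ := hGd
        refine ⟨fun _ => Ψd, fun m hm1 hm2 => ?_, fun m hm1 hm2 => by omega⟩
        have : m = d := by omega
        subst this
        exact hΨd
      | succ i ih =>
        intro hi
        obtain ⟨Ψs, hΨs1, hΨs2⟩ := ih (by omega)
        have hm0a : 1 ≤ d - i - 1 := by omega
        have hm0b : d - i - 1 < d := by omega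
        have hm0c : d - i - 1 + 1 = d - i := by omega
        have hGm1 : GoodW L (V (d - i - 1 + 1)) (d - i - 1 + 1) (Ψs (d - i - 1 + 1)) := by
          apply hΨs1 <;> omega
        obtain ⟨b, z, hz, hbV, hGnew⟩ := hGstep (d - i - 1) hm0a hm0b _ hGm1
        refine ⟨Function.update Ψs (d - i - 1) (b ++ (repW K (Ψs (d - i - 1 + 1)) ++ z)),
          fun m hm1 hm2 => ?_, fun m hm1 hm2 => ?_⟩
        · by_cases hmm : m = d - i - 1
          · subst hmm
            rw [Function.update_self]
            exact hGnew
          · rw [Function.update_of_ne hmm]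
            exact hΨs1 m (by omega) hm2
        · by_cases hmm : m = d - i - 1
          · subst hmm
            rw [Function.update_self, Function.update_of_ne (by omega)]
            exact ⟨b, z, hbV, rfl⟩
          · rw [Function.update_of_ne hmm, Function.update_of_ne (by omega)]
            exact hΨs2 m (by omega) hm2
    obtain ⟨Ψs, h1, h2⟩ := haux (d - 1) (le_refl _)
    refine ⟨Ψs, fun m hm1 hm2 => h1 m (by omega) hm2, fun m hm1 hm2 => h2 m (by omega) hm2⟩
  obtain ⟨Ψs, hGoodAll, hStruct⟩ := hGEX
  -- the main invariant, by induction on the level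
  have hINV : ∀ m, 1 ≤ m → m ≤ d → ∃ (S : List (List α)) (e r : ℕ),
      (congrData L (m-1)).eq S (V m) ∧ 1 ≤ e ∧
      stA B (stA B B.init S.reverse.flatten) (repW e (Ψs m)) = stA B B.init S.reverse.flatten ∧
      r = minInfOften (fun i =>
        B.prio (B.run (prependW S.reverse.flatten (perWord (Ψs m))) i)
          (prependW S.reverse.flatten (perWord (Ψs m)) i)) ∧
      (Even r ↔ Even (m+1)) ∧ m + 1 ≤ r := by
    intro m hm1
    induction m, hm1 using Nat.le_induction with
    | base =>
      intro h1d
      obtain ⟨x, hx⟩ := List.length_eq_one_iff.mp (hVlen 1 le_rfl (by omega))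
      exact inv_base L B hB (V 1) x hx (Ψs 1) (hGoodAll 1 le_rfl h1d)
    | succ m hm ih =>
      intro hmd
      obtain ⟨S, e, r, hS, he, hloop, hr, hrpar, hrlb⟩ := ih (by omega)
      obtain ⟨b, z, hbV, hΨeq⟩ := hStruct m (by omega) (by omega)
      obtain ⟨n2, hn2⟩ : ∃ n2, m = n2 + 1 := ⟨m - 1, by omega⟩
      rw [hΨeq] at hloop hr
      rw [hn2] at hS hloop hr hrpar hrlb hbV ⊢
      have hG' : GoodW L (V (n2+2)) (n2+2) (Ψs (n2+2)) := by
        have := hGoodAll (m+1) (by omega) hmd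
        rwa [hn2] at this
      have hGm : GoodW L (V (n2+1)) (n2+1) (b ++ (repW K (Ψs (n2+2)) ++ z)) := by
        have := hGoodAll m (by omega) (by omega)
        rwa [hΨeq, hn2] at this
      obtain ⟨S', e', r', h1, h2, h3, h4, h5, h6⟩ :=
        inv_step L B hB (V (n2+1)) (V (n2+2)) b z (Ψs (n2+2)) K (by omega) hbV hG' hGm
          S e r hS he hloop hr hrpar hrlb
      exact ⟨S', e', r', h1, h2, h3, h4, h5, h6⟩
  -- final contradiction at level d
  obtain ⟨S, e, r, hS, he, hloop, hr, hrpar, hrlb⟩ := hINV d hd1 le_rfl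
  have hmem : prependW S.reverse.flatten (perWord (Ψs d)) ∈ L ↔ Even (d+1) := by
    rw [eq_flatten L hS (perWord (Ψs d))]
    exact (hGoodAll d hd1 le_rfl).2.2
  obtain ⟨-, hreal, -⟩ := pin_lemma L B hB S.reverse.flatten (Ψs d)
    (hGoodAll d hd1 le_rfl).1 e he hloop (d+1) hmem
  obtain ⟨n1, hn1, hval⟩ := hreal
  have hle : r ≤ d := by
    rw [hr, ← hval]
    exact B.prio_le _ _
  omega
end
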